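/- arXiv:2511.07557 — 3 statements merged into one kernel-verified Lean document; each statement's English description precedes it below -/
import Mathlib

section
/- Moran's formula for two affine contractions: if f_j(x) = a_j x + b_j (j = 1, 2) with 0 < |a_1|, |a_2| < 1 map [0,1] into disjoint subintervals of [0,1], then the equation |a_1|^s + |a_2|^s = 1 has a unique solution s ∈ (0, 1), and this s equals the Hausdorff dimension of the attractor K satisfying K = f_1(K) ∪ f_2(K). -/
open Real Set

namespace MoranAux

variable (a₁ b₁ a₂ b₂ : ℝ)

/-- Composition of the affine maps along a word; head of the list is the outermost map. -/
def F : List Bool → ℝ → ℝ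
  | [] => id
  | b :: w => (fun x => (bif b then a₂ else a₁) * x + (bif b then b₂ else b₁)) ∘ F w

/-- Contraction ratio along a word. -/
def ρ (r₁ r₂ : ℝ) : List Bool → ℝ
  | [] => 1
  | b :: w => (bif b then r₂ else r₁) * ρ r₁ r₂ w

lemma F_nil : F a₁ b₁ a₂ b₂ [] = id := rfl

lemma F_cons (b : Bool) (w : List Bool) (x : ℝ) :
    F a₁ b₁ a₂ b₂ (b :: w) x
      = (bif b then a₂ else a₁) * (F a₁ b₁ a₂ b₂ w x) + (bif b then b₂ else b₁) := rfl

lemma F_append (u v : List Bool) (x : ℝ) :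
    F a₁ b₁ a₂ b₂ (u ++ v) x = F a₁ b₁ a₂ b₂ u (F a₁ b₁ a₂ b₂ v x) := by
  induction u with
  | nil => rfl
  | cons b u ih => simp [F_cons, ih]

lemma ρ_nil (r₁ r₂ : ℝ) : ρ r₁ r₂ [] = 1 := rfl

lemma ρ_cons (r₁ r₂ : ℝ) (b : Bool) (w : List Bool) :
    ρ r₁ r₂ (b :: w) = (bif b then r₂ else r₁) * ρ r₁ r₂ w := rfl

lemma ρ_append (r₁ r₂ : ℝ) (u v : List Bool) :
    ρ r₁ r₂ (u ++ v) = ρ r₁ r₂ u * ρ r₁ r₂ v := by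
  induction u with
  | nil => simp [ρ_nil]
  | cons b u ih => simp [ρ_cons, ih]; ring

variable {r₁ r₂ : ℝ}

lemma ρ_pos (h₁ : 0 < r₁) (h₂ : 0 < r₂) (w : List Bool) : 0 < ρ r₁ r₂ w := by
  induction w with
  | nil => norm_num [ρ_nil]
  | cons b w ih => cases b <;> simpa [ρ_cons] using by positivity

lemma ρ_le_one (h₁ : 0 < r₁) (h₁' : r₁ ≤ 1) (h₂ : 0 < r₂) (h₂' : r₂ ≤ 1) (w : List Bool) :
    ρ r₁ r₂ w ≤ 1 := by
  induction w with
  | nil => simp [ρ_nil]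
  | cons b w ih =>
      have := ρ_pos h₁ h₂ w
      cases b <;> simp only [ρ_cons, Bool.cond_false, Bool.cond_true] <;> nlinarith

lemma ρ_le_pow (h₁ : 0 < r₁) (h₂ : 0 < r₂) (w : List Bool) :
    ρ r₁ r₂ w ≤ (max r₁ r₂) ^ w.length := by
  induction w with
  | nil => simp [ρ_nil]
  | cons b w ih =>
      have hm : (0:ℝ) < max r₁ r₂ := lt_max_of_lt_left h₁
      have hb : (bif b then r₂ else r₁) ≤ max r₁ r₂ := by cases b <;> simp
      have hρ := ρ_pos h₁ h₂ w
      calc ρ r₁ r₂ (b :: w) = (bif b then r₂ else r₁) * ρ r₁ r₂ w := rfl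
        _ ≤ max r₁ r₂ * (max r₁ r₂) ^ w.length := by
            apply mul_le_mul hb ih (le_of_lt hρ) (le_of_lt hm)
        _ = (max r₁ r₂) ^ (b :: w).length := by rw [List.length_cons]; ring

lemma min_le_ρ_cond (h₁ : 0 < r₁) (h₂ : 0 < r₂) (b : Bool) :
    min r₁ r₂ ≤ (bif b then r₂ else r₁) := by cases b <;> simp

/-- The words of length `n` as a finset. -/
def Words : ℕ → Finset (List Bool)
  | 0 => {[]}
  | n + 1 => (Words n).image (List.cons false) ∪ (Words n).image (List.cons true)

lemma mem_Words {n : ℕ} {w : List Bool} : w ∈ Words n ↔ w.length = n := by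
  induction n generalizing w with
  | zero => simp [Words]
  | succ n ih =>
      constructor
      · intro hw
        simp only [Words, Finset.mem_union, Finset.mem_image] at hw
        rcases hw with ⟨v, hv, rfl⟩ | ⟨v, hv, rfl⟩ <;> simp [ih.1 hv]
      · intro hw
        cases w with
        | nil => simp at hw
        | cons b w =>
            simp only [List.length_cons, Nat.add_right_cancel_iff] at hw
            cases b
            · exact Finset.mem_union_left _ (Finset.mem_image_of_mem _ (ih.2 hw))
            · exact Finset.mem_union_right _ (Finset.mem_image_of_mem _ (ih.2 hw))

/-- The basic sum identity: if `r₁^s + r₂^s = 1` then the `s`-masses of level-`n` words sum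
to `1`. -/
lemma sum_Words (h₁ : 0 < r₁) (h₂ : 0 < r₂) {s : ℝ} (hs : r₁ ^ s + r₂ ^ s = 1) (n : ℕ) :
    ∑ w ∈ Words n, ρ r₁ r₂ w ^ s = 1 := by
  induction n with
  | zero => simp [Words, ρ_nil]
  | succ n ih =>
      have hdisj : Disjoint ((Words n).image (List.cons false))
          ((Words n).image (List.cons true)) := by
        simp only [Finset.disjoint_left, Finset.mem_image]
        rintro w ⟨v, _, rfl⟩ ⟨u, _, h⟩
        simp at h
      have hinj : ∀ b : Bool, ∑ w ∈ (Words n).image (List.cons b), ρ r₁ r₂ w ^ s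
          = (bif b then r₂ else r₁) ^ s * ∑ w ∈ Words n, ρ r₁ r₂ w ^ s := by
        intro b
        rw [Finset.sum_image (by intro x _ y _ h; simpa using h), Finset.mul_sum]
        refine Finset.sum_congr rfl fun w _ => ?_
        rw [ρ_cons, Real.mul_rpow (by cases b <;> simp [h₁.le, h₂.le]) (ρ_pos h₁ h₂ w).le]
      rw [Words, Finset.sum_union hdisj, hinj, hinj, ih]
      simpa using by linarith [hs]

end MoranAux


open Real Set

namespace MoranAux2

/-- Image of the unit interval under a nondegenerate affine map. -/
lemma affine_image {A B : ℝ} (hA : A ≠ 0) :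
    (fun x => A * x + B) '' Icc (0:ℝ) 1 = Icc (min (A + B) B) (max (A + B) B) := by
  rcases hA.lt_or_gt with hA | hA
  · ext y
    simp only [mem_image, mem_Icc]
    constructor
    · rintro ⟨x, ⟨hx0, hx1⟩, rfl⟩
      exact ⟨(min_le_left _ _).trans (by nlinarith), le_trans (by nlinarith) (le_max_right _ _)⟩
    · intro ⟨h1, h2⟩
      have hmin : min (A + B) B = A + B := min_eq_left (by linarith)
      have hmax : max (A + B) B = B := max_eq_right (by linarith)
      rw [hmin] at h1; rw [hmax] at h2
      refine ⟨(y - B) / A, ⟨?_, ?_⟩, by field_simp; ring⟩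
      · rw [le_div_iff_of_neg hA]; linarith
      · rw [div_le_one_of_neg hA]; linarith
  · rw [min_eq_right (by linarith), max_eq_left (by linarith)]
    have := Set.image_affine_Icc' hA B (0:ℝ) 1
    simpa using this

lemma affine_image' {A B : ℝ} (hA : A ≠ 0) :
    ∃ c : ℝ, (fun x => A * x + B) '' Icc (0:ℝ) 1 = Icc c (c + |A|) := by
  refine ⟨min (A + B) B, ?_⟩
  rw [affine_image hA]
  have h := max_sub_min_eq_abs (A + B) B
  have h2 : |B - (A + B)| = |A| := by rw [show B - (A + B) = -A by ring, abs_neg]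
  rw [h2] at h
  rw [show (A + B) ⊔ B = (A + B) ⊓ B + |A| by linarith]

end MoranAux2


open Real Set MoranAux MoranAux2

namespace MoranAux

variable {a₁ b₁ a₂ b₂ : ℝ}

lemma F_affine (ha₁ : a₁ ≠ 0) (ha₂ : a₂ ≠ 0) (w : List Bool) :
    ∃ A B : ℝ, A ≠ 0 ∧ |A| = ρ |a₁| |a₂| w ∧ ∀ x, F a₁ b₁ a₂ b₂ w x = A * x + B := by
  induction w with
  | nil => exact ⟨1, 0, one_ne_zero, by simp [ρ_nil], fun x => by simp [F_nil]⟩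
  | cons b w ih =>
      obtain ⟨A, B, hA, hρ, hx⟩ := ih
      refine ⟨(bif b then a₂ else a₁) * A, (bif b then a₂ else a₁) * B +
        (bif b then b₂ else b₁), ?_, ?_, fun x => ?_⟩
      · cases b <;> simp [ha₁, ha₂, hA]
      · cases b <;> simp [abs_mul, hρ, ρ_cons]
      · rw [F_cons, hx]; ring

lemma F_dist (ha₁ : a₁ ≠ 0) (ha₂ : a₂ ≠ 0) (w : List Bool) (x y : ℝ) :
    |F a₁ b₁ a₂ b₂ w x - F a₁ b₁ a₂ b₂ w y| = ρ |a₁| |a₂| w * |x - y| := by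
  obtain ⟨A, B, hA, hρ, hx⟩ := F_affine (b₁ := b₁) (b₂ := b₂) ha₁ ha₂ w
  rw [hx, hx, ← hρ, ← abs_mul]
  congr 1; ring

lemma F_inj (ha₁ : a₁ ≠ 0) (ha₂ : a₂ ≠ 0) (w : List Bool) :
    Function.Injective (F a₁ b₁ a₂ b₂ w) := by
  intro x y h
  have := F_dist (b₁ := b₁) (b₂ := b₂) ha₁ ha₂ w x y
  rw [h, sub_self, abs_zero] at this
  have hρ : 0 < ρ |a₁| |a₂| w := ρ_pos (abs_pos.2 ha₁) (abs_pos.2 ha₂) w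
  have : |x - y| = 0 := by
    rcases mul_eq_zero.1 this.symm with h' | h'
    · exact absurd h' hρ.ne'
    · exact h'
  have := abs_eq_zero.1 this
  linarith [sub_eq_zero.1 this, this]

lemma F_mapsTo (hm₁ : MapsTo (fun x => a₁ * x + b₁) (Icc (0:ℝ) 1) (Icc (0:ℝ) 1))
    (hm₂ : MapsTo (fun x => a₂ * x + b₂) (Icc (0:ℝ) 1) (Icc (0:ℝ) 1)) (w : List Bool) :
    MapsTo (F a₁ b₁ a₂ b₂ w) (Icc (0:ℝ) 1) (Icc (0:ℝ) 1) := by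
  induction w with
  | nil => exact mapsTo_id _
  | cons b w ih =>
      have : F a₁ b₁ a₂ b₂ (b :: w)
          = (fun x => (bif b then a₂ else a₁) * x + (bif b then b₂ else b₁)) ∘
            F a₁ b₁ a₂ b₂ w := rfl
      rw [this]
      cases b
      · exact hm₁.comp ih
      · exact hm₂.comp ih

lemma F_image_Icc (ha₁ : a₁ ≠ 0) (ha₂ : a₂ ≠ 0) (w : List Bool) :
    ∃ c : ℝ, F a₁ b₁ a₂ b₂ w '' Icc (0:ℝ) 1 = Icc c (c + ρ |a₁| |a₂| w) := by
  obtain ⟨A, B, hA, hρ, hx⟩ := F_affine (b₁ := b₁) (b₂ := b₂) ha₁ ha₂ w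
  obtain ⟨c, hc⟩ := affine_image' (B := B) hA
  refine ⟨c, ?_⟩
  rw [← hρ, ← hc]
  exact image_congr fun x _ => hx x

lemma F_cons_image (b : Bool) (w : List Bool) (s : Set ℝ) :
    F a₁ b₁ a₂ b₂ (b :: w) '' s
      = (fun x => (bif b then a₂ else a₁) * x + (bif b then b₂ else b₁)) ''
        (F a₁ b₁ a₂ b₂ w '' s) := by
  rw [show F a₁ b₁ a₂ b₂ (b :: w)
      = (fun x => (bif b then a₂ else a₁) * x + (bif b then b₂ else b₁)) ∘
        F a₁ b₁ a₂ b₂ w from rfl, image_comp]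

lemma F_append_image (u v : List Bool) (s : Set ℝ) :
    F a₁ b₁ a₂ b₂ (u ++ v) '' s = F a₁ b₁ a₂ b₂ u '' (F a₁ b₁ a₂ b₂ v '' s) := by
  rw [← image_comp]
  exact image_congr fun x _ => F_append _ _ _ _ u v x

lemma F_mono_prefix (hm₁ : MapsTo (fun x => a₁ * x + b₁) (Icc (0:ℝ) 1) (Icc (0:ℝ) 1))
    (hm₂ : MapsTo (fun x => a₂ * x + b₂) (Icc (0:ℝ) 1) (Icc (0:ℝ) 1))
    {u v : List Bool} (h : u <+: v) :
    F a₁ b₁ a₂ b₂ v '' Icc (0:ℝ) 1 ⊆ F a₁ b₁ a₂ b₂ u '' Icc (0:ℝ) 1 := by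
  obtain ⟨t, rfl⟩ := h
  rw [F_append_image]
  exact image_mono  ((F_mapsTo hm₁ hm₂ t).image_subset)

variable (hm₁ : MapsTo (fun x => a₁ * x + b₁) (Icc (0:ℝ) 1) (Icc (0:ℝ) 1))
variable (hm₂ : MapsTo (fun x => a₂ * x + b₂) (Icc (0:ℝ) 1) (Icc (0:ℝ) 1))
variable (hd : Disjoint ((fun x => a₁ * x + b₁) '' Icc (0:ℝ) 1)
    ((fun x => a₂ * x + b₂) '' Icc (0:ℝ) 1))

include hm₁ hm₂ hd in
lemma F_disjoint_siblings (ha₁ : a₁ ≠ 0) (ha₂ : a₂ ≠ 0) (w : List Bool) :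
    Disjoint (F a₁ b₁ a₂ b₂ (w ++ [false]) '' Icc (0:ℝ) 1)
      (F a₁ b₁ a₂ b₂ (w ++ [true]) '' Icc (0:ℝ) 1) := by
  rw [F_append_image, F_append_image]
  have h1 : F a₁ b₁ a₂ b₂ [false] '' Icc (0:ℝ) 1 = (fun x => a₁ * x + b₁) '' Icc (0:ℝ) 1 := by
    exact image_congr fun x _ => rfl
  have h2 : F a₁ b₁ a₂ b₂ [true] '' Icc (0:ℝ) 1 = (fun x => a₂ * x + b₂) '' Icc (0:ℝ) 1 := by
    exact image_congr fun x _ => rfl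
  rw [h1, h2]
  exact hd.image ((F_inj ha₁ ha₂ w).injOn) (subset_univ _) (subset_univ _)

include hm₁ hm₂ hd in
lemma F_disjoint_sameLength (ha₁ : a₁ ≠ 0) (ha₂ : a₂ ≠ 0) :
    ∀ u v : List Bool, u.length = v.length → u ≠ v →
      Disjoint (F a₁ b₁ a₂ b₂ u '' Icc (0:ℝ) 1) (F a₁ b₁ a₂ b₂ v '' Icc (0:ℝ) 1) := by
  intro u
  induction u with
  | nil => intro v hlen hne; cases v with
      | nil => exact absurd rfl hne
      | cons c v => simp at hlen
  | cons b u ih =>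
      intro v hlen hne
      cases v with
      | nil => simp at hlen
      | cons c v =>
          simp only [List.length_cons, Nat.add_right_cancel_iff] at hlen
          rw [F_cons_image, F_cons_image]
          by_cases hbc : b = c
          · subst hbc
            have hne' : u ≠ v := fun h => hne (by rw [h])
            have hdj := ih v hlen hne'
            have hinj : Function.Injective
                (fun x => (bif b then a₂ else a₁) * x + (bif b then b₂ else b₁)) := by
              intro x y hxy
              simp only at hxy
              have : (bif b then a₂ else a₁) ≠ 0 := by cases b <;> simpa
              have := mul_left_cancel₀ this (by linarith : (bif b then a₂ else a₁) * x
                = (bif b then a₂ else a₁) * y)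
              exact this
            exact hdj.image hinj.injOn (subset_univ _) (subset_univ _)
          · have hsub₁ : F a₁ b₁ a₂ b₂ u '' Icc (0:ℝ) 1 ⊆ Icc (0:ℝ) 1 :=
              (F_mapsTo hm₁ hm₂ u).image_subset
            have hsub₂ : F a₁ b₁ a₂ b₂ v '' Icc (0:ℝ) 1 ⊆ Icc (0:ℝ) 1 :=
              (F_mapsTo hm₁ hm₂ v).image_subset
            have key : Disjoint ((fun x => (bif b then a₂ else a₁) * x +
                (bif b then b₂ else b₁)) '' Icc (0:ℝ) 1)
                ((fun x => (bif c then a₂ else a₁) * x + (bif c then b₂ else b₁)) ''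
                  Icc (0:ℝ) 1) := by
              cases b <;> cases c
              · exact absurd rfl hbc
              · simpa using hd
              · simpa using hd.symm
              · exact absurd rfl hbc
            exact key.mono (image_mono  hsub₁) (image_mono  hsub₂)

end MoranAux


open Real Set MoranAux MoranAux2

namespace MoranAux

variable {a₁ b₁ a₂ b₂ : ℝ} {K : Set ℝ}

lemma F_single_false (z : ℝ) : F a₁ b₁ a₂ b₂ [false] z = a₁ * z + b₁ := rfl
lemma F_single_true (z : ℝ) : F a₁ b₁ a₂ b₂ [true] z = a₂ * z + b₂ := rfl

section Kfacts

variable (hK₁ : (fun x => a₁ * x + b₁) '' K ⊆ K) (hK₂ : (fun x => a₂ * x + b₂) '' K ⊆ K)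

include hK₁ hK₂ in
lemma F_image_K_subset (w : List Bool) : F a₁ b₁ a₂ b₂ w '' K ⊆ K := by
  induction w with
  | nil => simp [F_nil]
  | cons b w ih =>
      rw [F_cons_image]
      cases b
      · exact (image_mono  ih).trans hK₁
      · exact (image_mono  ih).trans hK₂

variable (hKattr : K = (fun x => a₁ * x + b₁) '' K ∪ (fun x => a₂ * x + b₂) '' K)

include hKattr in
lemma K_cover (n : ℕ) : K ⊆ ⋃ w ∈ Words n, F a₁ b₁ a₂ b₂ w '' K := by
  induction n with
  | zero => intro x hx; simp [Words, F_nil, hx]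
  | succ n ih =>
      intro x hx
      have hx' := ih hx
      simp only [mem_iUnion, exists_prop] at hx' ⊢
      obtain ⟨w, hw, y, hy, rfl⟩ := hx'
      rw [hKattr] at hy
      rcases hy with ⟨z, hz, rfl⟩ | ⟨z, hz, rfl⟩
      · refine ⟨w ++ [false], ?_, z, hz, ?_⟩
        · rw [mem_Words]; simp [mem_Words.1 hw]
        · rw [F_append]; rfl
      · refine ⟨w ++ [true], ?_, z, hz, ?_⟩
        · rw [mem_Words]; simp [mem_Words.1 hw]
        · rw [F_append]; rfl

end Kfacts

/-- Stopping-time construction: subdivide the word `w` until the ratio drops below `d`,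
with recursion depth `n`. -/
noncomputable def stopF (r₁ r₂ d : ℝ) : ℕ → List Bool → Finset (List Bool)
  | 0, w => {w}
  | n + 1, w =>
      if ρ r₁ r₂ w ≤ d then {w}
      else stopF r₁ r₂ d n (w ++ [false]) ∪ stopF r₁ r₂ d n (w ++ [true])

variable {r₁ r₂ d : ℝ}

lemma stopF_zero (w : List Bool) : stopF r₁ r₂ d 0 w = {w} := rfl

lemma stopF_succ (n : ℕ) (w : List Bool) :
    stopF r₁ r₂ d (n + 1) w =
      if ρ r₁ r₂ w ≤ d then {w}
      else stopF r₁ r₂ d n (w ++ [false]) ∪ stopF r₁ r₂ d n (w ++ [true]) := rfl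

lemma stopF_prefix : ∀ n w, ∀ v ∈ stopF r₁ r₂ d n w, w <+: v := by
  intro n
  induction n with
  | zero => intro w v hv; rw [stopF_zero] at hv; simp at hv; exact hv ▸ List.prefix_refl _
  | succ n ih =>
      intro w v hv
      rw [stopF_succ] at hv
      split at hv
      · simp at hv; exact hv ▸ List.prefix_refl _
      · rcases Finset.mem_union.1 hv with h | h
        · exact ((w.prefix_append [false]).trans (ih _ v h))
        · exact ((w.prefix_append [true]).trans (ih _ v h))

lemma stopF_le (h₁ : 0 < r₁) (h₂ : 0 < r₂) :
    ∀ n w, ρ r₁ r₂ w * (max r₁ r₂) ^ n ≤ d → ∀ v ∈ stopF r₁ r₂ d n w, ρ r₁ r₂ v ≤ d := by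
  intro n
  induction n with
  | zero => intro w hw v hv; rw [stopF_zero] at hv; simp at hv; subst hv; simpa using hw
  | succ n ih =>
      intro w hw v hv
      rw [stopF_succ] at hv
      split at hv
      · simp at hv; subst hv; assumption
      · have hm : (0:ℝ) < max r₁ r₂ := lt_max_of_lt_left h₁
        have step : ∀ b : Bool, ρ r₁ r₂ (w ++ [b]) * (max r₁ r₂) ^ n ≤ d := by
          intro b
          have : ρ r₁ r₂ (w ++ [b]) ≤ ρ r₁ r₂ w * max r₁ r₂ := by
            rw [ρ_append]
            have : ρ r₁ r₂ [b] ≤ max r₁ r₂ := by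
              cases b <;> simp [ρ_cons, ρ_nil]
            nlinarith [ρ_pos h₁ h₂ w]
          calc ρ r₁ r₂ (w ++ [b]) * (max r₁ r₂) ^ n
              ≤ (ρ r₁ r₂ w * max r₁ r₂) * (max r₁ r₂) ^ n := by
                exact mul_le_mul_of_nonneg_right this (by positivity)
            _ = ρ r₁ r₂ w * (max r₁ r₂) ^ (n + 1) := by ring
            _ ≤ d := hw
        rcases Finset.mem_union.1 hv with h | h
        · exact ih _ (step false) v h
        · exact ih _ (step true) v h

lemma stopF_ge (h₁ : 0 < r₁) (h₂ : 0 < r₂) :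
    ∀ n w, ∀ v ∈ stopF r₁ r₂ d n w, min (ρ r₁ r₂ w) (min r₁ r₂ * d) ≤ ρ r₁ r₂ v := by
  intro n
  induction n with
  | zero => intro w v hv; rw [stopF_zero] at hv; simp at hv; subst hv; exact min_le_left _ _
  | succ n ih =>
      intro w v hv
      rw [stopF_succ] at hv
      split at hv
      · simp at hv; subst hv; exact min_le_left _ _
      · rename_i hgt
        push_neg at hgt
        have step : ∀ b : Bool, min r₁ r₂ * d ≤ ρ r₁ r₂ (w ++ [b]) := by
          intro b
          rw [ρ_append]
          have h1 : min r₁ r₂ ≤ ρ r₁ r₂ [b] := by cases b <;> simp [ρ_cons, ρ_nil]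
          have h2 : (0:ℝ) < min r₁ r₂ := lt_min h₁ h₂
          calc min r₁ r₂ * d ≤ min r₁ r₂ * ρ r₁ r₂ w := by nlinarith
            _ ≤ ρ r₁ r₂ w * ρ r₁ r₂ [b] := by
                rw [mul_comm]; exact mul_le_mul_of_nonneg_left h1 (ρ_pos h₁ h₂ w).le
        rcases Finset.mem_union.1 hv with h | h
        · exact le_trans (le_min ((min_le_right _ _).trans (step false))
            (min_le_right _ _)) (ih _ v h)
        · exact le_trans (le_min ((min_le_right _ _).trans (step true))
            (min_le_right _ _)) (ih _ v h)

end MoranAux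


open Real Set MoranAux MoranAux2

namespace MoranAux

variable {a₁ b₁ a₂ b₂ r₁ r₂ d : ℝ} {K : Set ℝ}

section StopCover

variable (hK₁ : (fun x => a₁ * x + b₁) '' K ⊆ K) (hK₂ : (fun x => a₂ * x + b₂) '' K ⊆ K)
variable (hKattr : K = (fun x => a₁ * x + b₁) '' K ∪ (fun x => a₂ * x + b₂) '' K)
variable (hKI : K ⊆ Icc (0:ℝ) 1)

include hKattr hKI in
lemma stopF_cover : ∀ n w, F a₁ b₁ a₂ b₂ w '' K ⊆
    ⋃ v ∈ stopF r₁ r₂ d n w, F a₁ b₁ a₂ b₂ v '' Icc (0:ℝ) 1 := by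
  intro n
  induction n with
  | zero =>
      intro w
      rw [stopF_zero]
      simp only [Finset.mem_singleton, iUnion_iUnion_eq_left]
      exact image_mono  hKI
  | succ n ih =>
      intro w
      rw [stopF_succ]
      split_ifs
      · simp only [Finset.mem_singleton, iUnion_iUnion_eq_left]
        exact image_mono  hKI
      · have hsplit : F a₁ b₁ a₂ b₂ w '' K
            = F a₁ b₁ a₂ b₂ (w ++ [false]) '' K ∪ F a₁ b₁ a₂ b₂ (w ++ [true]) '' K := by
          rw [F_append_image, F_append_image]
          have h1 : F a₁ b₁ a₂ b₂ [false] '' K = (fun x => a₁ * x + b₁) '' K :=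
            image_congr fun x _ => rfl
          have h2 : F a₁ b₁ a₂ b₂ [true] '' K = (fun x => a₂ * x + b₂) '' K :=
            image_congr fun x _ => rfl
          rw [h1, h2, ← image_union, ← hKattr]
        rw [hsplit]
        intro x hx
        rcases hx with hx | hx
        · have hx' := ih (w ++ [false]) hx
          simp only [mem_iUnion, exists_prop] at hx' ⊢
          obtain ⟨v, hv, hxv⟩ := hx'
          exact ⟨v, Finset.mem_union_left _ hv, hxv⟩
        · have hx' := ih (w ++ [true]) hx
          simp only [mem_iUnion, exists_prop] at hx' ⊢
          obtain ⟨v, hv, hxv⟩ := hx'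
          exact ⟨v, Finset.mem_union_right _ hv, hxv⟩

end StopCover

section StopDisjoint

variable (hm₁ : MapsTo (fun x => a₁ * x + b₁) (Icc (0:ℝ) 1) (Icc (0:ℝ) 1))
variable (hm₂ : MapsTo (fun x => a₂ * x + b₂) (Icc (0:ℝ) 1) (Icc (0:ℝ) 1))
variable (hd : Disjoint ((fun x => a₁ * x + b₁) '' Icc (0:ℝ) 1)
    ((fun x => a₂ * x + b₂) '' Icc (0:ℝ) 1))

include hm₁ hm₂ hd in
lemma stopF_pairwise_disjoint (ha₁ : a₁ ≠ 0) (ha₂ : a₂ ≠ 0) :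
    ∀ n w, ∀ v ∈ stopF r₁ r₂ d n w, ∀ v' ∈ stopF r₁ r₂ d n w, v ≠ v' →
      Disjoint (F a₁ b₁ a₂ b₂ v '' Icc (0:ℝ) 1) (F a₁ b₁ a₂ b₂ v' '' Icc (0:ℝ) 1) := by
  intro n
  induction n with
  | zero =>
      intro w v hv v' hv' hne
      rw [stopF_zero] at hv hv'
      simp at hv hv'
      exact absurd (hv.trans hv'.symm) hne
  | succ n ih =>
      intro w v hv v' hv' hne
      rw [stopF_succ] at hv hv'
      split at hv
      · rw [if_pos (by assumption)] at hv'
        simp at hv hv'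
        exact absurd (hv.trans hv'.symm) hne
      · rw [if_neg (by assumption)] at hv'
        have hsib := F_disjoint_siblings (b₁ := b₁) (b₂ := b₂) hm₁ hm₂ hd ha₁ ha₂ w
        rcases Finset.mem_union.1 hv with h | h <;> rcases Finset.mem_union.1 hv' with h' | h'
        · exact ih _ v h v' h' hne
        · exact hsib.mono (F_mono_prefix hm₁ hm₂ (stopF_prefix _ _ _ h))
            (F_mono_prefix hm₁ hm₂ (stopF_prefix _ _ _ h'))
        · exact (hsib.symm).mono (F_mono_prefix hm₁ hm₂ (stopF_prefix _ _ _ h))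
            (F_mono_prefix hm₁ hm₂ (stopF_prefix _ _ _ h'))
        · exact ih _ v h v' h' hne

variable (hKne : K.Nonempty) (hKI : K ⊆ Icc (0:ℝ) 1)
variable (hK₁ : (fun x => a₁ * x + b₁) '' K ⊆ K) (hK₂ : (fun x => a₂ * x + b₂) '' K ⊆ K)

include hm₁ hm₂ hd hKne hKI hK₁ hK₂ in
lemma exists_prefix_mem (ha₁ : a₁ ≠ 0) (ha₂ : a₂ ≠ 0) (W : Finset (List Bool))
    (hcov : K ⊆ ⋃ w ∈ W, F a₁ b₁ a₂ b₂ w '' Icc (0:ℝ) 1)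
    (v : List Bool) (hlen : ∀ w ∈ W, w.length ≤ v.length) :
    ∃ w ∈ W, w <+: v := by
  obtain ⟨x₀, hx₀⟩ := hKne
  have hp : F a₁ b₁ a₂ b₂ v x₀ ∈ K :=
    F_image_K_subset hK₁ hK₂ v (mem_image_of_mem _ hx₀)
  obtain ⟨w, hw, hpw⟩ := by
    have := hcov hp
    simpa only [mem_iUnion, exists_prop] using this
  refine ⟨w, hw, ?_⟩
  set k := w.length with hk
  have hkv : k ≤ v.length := hlen w hw
  have htd : v.take k ++ v.drop k = v := List.take_append_drop _ _
  have hpt : F a₁ b₁ a₂ b₂ v x₀ ∈ F a₁ b₁ a₂ b₂ (v.take k) '' Icc (0:ℝ) 1 := by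
    have : F a₁ b₁ a₂ b₂ v x₀ = F a₁ b₁ a₂ b₂ (v.take k) (F a₁ b₁ a₂ b₂ (v.drop k) x₀) := by
      conv_lhs => rw [← htd]
      rw [F_append]
    rw [this]
    exact mem_image_of_mem _ (F_mapsTo hm₁ hm₂ _ (hKI hx₀))
  by_cases hwt : w = v.take k
  · exact hwt ▸ v.take_prefix k
  · exfalso
    have hlen' : w.length = (v.take k).length := by
      rw [List.length_take]; omega
    have hdj := F_disjoint_sameLength (b₁ := b₁) (b₂ := b₂) hm₁ hm₂ hd ha₁ ha₂ w
      (v.take k) hlen' hwt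
    exact hdj.ne_of_mem hpw hpt rfl

include hm₁ hm₂ hd hKne hKI hK₁ hK₂ in
/-- Combinatorial core of the mass distribution principle: any finite cover of `K` by
cylinders has total `s`-mass at least `1`. -/
lemma one_le_sum_mass (ha₁ : a₁ ≠ 0) (ha₂ : a₂ ≠ 0) {s : ℝ}
    (hs : |a₁| ^ s + |a₂| ^ s = 1) (W : Finset (List Bool))
    (hcov : K ⊆ ⋃ w ∈ W, F a₁ b₁ a₂ b₂ w '' Icc (0:ℝ) 1) :
    1 ≤ ∑ w ∈ W, ρ |a₁| |a₂| w ^ s := by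
  have h₁ : (0:ℝ) < |a₁| := abs_pos.2 ha₁
  have h₂ : (0:ℝ) < |a₂| := abs_pos.2 ha₂
  set n := W.sup List.length with hn
  have hlen : ∀ w ∈ W, w.length ≤ n := fun w hw => Finset.le_sup hw
  -- choice function
  have hch : ∀ v ∈ Words n, ∃ w ∈ W, w <+: v := by
    intro v hv
    exact exists_prefix_mem hm₁ hm₂ hd hKne hKI hK₁ hK₂ ha₁ ha₂ W hcov v
      (fun w hw => (hlen w hw).trans_eq (mem_Words.1 hv).symm)
  classical
  set g : List Bool → List Bool := fun v => if h : ∃ w ∈ W, w <+: v then h.choose else []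
    with hg
  have hgmem : ∀ v ∈ Words n, g v ∈ W ∧ g v <+: v := by
    intro v hv
    have h := hch v hv
    simp only [hg, dif_pos h]
    exact ⟨h.choose_spec.1, h.choose_spec.2⟩
  calc (1:ℝ) = ∑ v ∈ Words n, ρ |a₁| |a₂| v ^ s := (sum_Words h₁ h₂ hs n).symm
    _ = ∑ w ∈ W, ∑ v ∈ (Words n).filter (fun v => g v = w), ρ |a₁| |a₂| v ^ s :=
        (Finset.sum_fiberwise_of_maps_to (fun v hv => (hgmem v hv).1) _).symm
    _ ≤ ∑ w ∈ W, ρ |a₁| |a₂| w ^ s := by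
        refine Finset.sum_le_sum fun w hw => ?_
        have hsub : (Words n).filter (fun v => g v = w)
            ⊆ (Words (n - w.length)).image (fun u => w ++ u) := by
          intro v hv
          rw [Finset.mem_filter] at hv
          obtain ⟨hvW, hgv⟩ := hv
          obtain ⟨u, rfl⟩ := hgv ▸ (hgmem v hvW).2
          refine Finset.mem_image_of_mem _ ?_
          rw [mem_Words]
          have := mem_Words.1 hvW
          rw [List.length_append] at this
          omega
        have himg : ∑ v ∈ (Words (n - w.length)).image (fun u => w ++ u),
            ρ |a₁| |a₂| v ^ s = ρ |a₁| |a₂| w ^ s := by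
          rw [Finset.sum_image (fun x _ y _ h => List.append_cancel_left h)]
          have : ∀ u ∈ Words (n - w.length), ρ |a₁| |a₂| (w ++ u) ^ s
              = ρ |a₁| |a₂| w ^ s * ρ |a₁| |a₂| u ^ s := by
            intro u _
            rw [ρ_append, Real.mul_rpow (ρ_pos h₁ h₂ w).le (ρ_pos h₁ h₂ u).le]
          rw [Finset.sum_congr rfl this, ← Finset.mul_sum, sum_Words h₁ h₂ hs, mul_one]
        calc ∑ v ∈ (Words n).filter (fun v => g v = w), ρ |a₁| |a₂| v ^ s
            ≤ ∑ v ∈ (Words (n - w.length)).image (fun u => w ++ u), ρ |a₁| |a₂| v ^ s :=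
              Finset.sum_le_sum_of_subset_of_nonneg hsub
                (fun v _ _ => Real.rpow_nonneg (ρ_pos h₁ h₂ v).le s)
          _ = ρ |a₁| |a₂| w ^ s := himg

end StopDisjoint

end MoranAux


open Real Set MoranAux MoranAux2 Metric MeasureTheory

namespace MoranAux

variable {a₁ b₁ a₂ b₂ : ℝ} {K : Set ℝ}

/-- The attractor is contained in the unit interval. -/
lemma K_subset_Icc (ha₁' : |a₁| < 1) (ha₂' : |a₂| < 1)
    (hm₁ : MapsTo (fun x => a₁ * x + b₁) (Icc (0:ℝ) 1) (Icc (0:ℝ) 1))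
    (hm₂ : MapsTo (fun x => a₂ * x + b₂) (Icc (0:ℝ) 1) (Icc (0:ℝ) 1))
    (hKc : IsCompact K) (hKne : K.Nonempty)
    (hKattr : K = (fun x => a₁ * x + b₁) '' K ∪ (fun x => a₂ * x + b₂) '' K) :
    K ⊆ Icc (0:ℝ) 1 := by
  set I : Set ℝ := Icc (0:ℝ) 1 with hI
  have hIne : I.Nonempty := ⟨0, by simp [hI]⟩
  have hIc : IsCompact I := isCompact_Icc
  have hgc : Continuous fun x : ℝ => infDist x I := continuous_infDist_pt I
  obtain ⟨x₀, hx₀K, hmax⟩ := hKc.exists_isMaxOn hKne hgc.continuousOn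
  set M := infDist x₀ I with hM
  have hM0 : 0 ≤ M := infDist_nonneg
  have key : M ≤ max |a₁| |a₂| * M := by
    have hx₀' : x₀ ∈ (fun x => a₁ * x + b₁) '' K ∪ (fun x => a₂ * x + b₂) '' K :=
      hKattr ▸ hx₀K
    rcases hx₀' with ⟨y, hy, rfl⟩ | ⟨y, hy, rfl⟩
    · obtain ⟨z, hz, hdist⟩ := hIc.exists_infDist_eq_dist hIne y
      calc infDist (a₁ * y + b₁) I ≤ dist (a₁ * y + b₁) (a₁ * z + b₁) :=
            infDist_le_dist_of_mem (hm₁ hz)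
        _ = |a₁| * dist y z := by
            rw [Real.dist_eq, Real.dist_eq, ← abs_mul]; congr 1; ring
        _ = |a₁| * infDist y I := by rw [hdist]
        _ ≤ max |a₁| |a₂| * M := by
            have h1 : infDist y I ≤ M := hmax hy
            have h2 : (0:ℝ) ≤ |a₁| := abs_nonneg _
            nlinarith [le_max_left |a₁| |a₂|, infDist_nonneg (x := y) (s := I)]
    · obtain ⟨z, hz, hdist⟩ := hIc.exists_infDist_eq_dist hIne y
      calc infDist (a₂ * y + b₂) I ≤ dist (a₂ * y + b₂) (a₂ * z + b₂) :=
            infDist_le_dist_of_mem (hm₂ hz)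
        _ = |a₂| * dist y z := by
            rw [Real.dist_eq, Real.dist_eq, ← abs_mul]; congr 1; ring
        _ = |a₂| * infDist y I := by rw [hdist]
        _ ≤ max |a₁| |a₂| * M := by
            have h1 : infDist y I ≤ M := hmax hy
            have h2 : (0:ℝ) ≤ |a₂| := abs_nonneg _
            nlinarith [le_max_right |a₁| |a₂|, infDist_nonneg (x := y) (s := I)]
  have hmaxlt : max |a₁| |a₂| < 1 := max_lt ha₁' ha₂'
  have hM_eq : M = 0 := by nlinarith
  intro x hx
  have h1 : infDist x I ≤ M := hmax hx
  have h2 : infDist x I = 0 := le_antisymm (hM_eq ▸ h1) infDist_nonneg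
  have := (isClosed_Icc.mem_iff_infDist_zero hIne).2 h2
  exact this


open scoped Classical in
/-- Counting bound: the total `s`-mass of stopping cylinders meeting a set `U` is at most
`(4 / min r₁ r₂) * (diam U) ^ s`. -/
lemma mass_of_set_le (ha₁ : 0 < |a₁|) (ha₁' : |a₁| < 1) (ha₂ : 0 < |a₂|) (ha₂' : |a₂| < 1)
    (hm₁ : MapsTo (fun x => a₁ * x + b₁) (Icc (0:ℝ) 1) (Icc (0:ℝ) 1))
    (hm₂ : MapsTo (fun x => a₂ * x + b₂) (Icc (0:ℝ) 1) (Icc (0:ℝ) 1))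
    (hd : Disjoint ((fun x => a₁ * x + b₁) '' Icc (0:ℝ) 1)
      ((fun x => a₂ * x + b₂) '' Icc (0:ℝ) 1))
    {s : ℝ} (hs0 : 0 ≤ s)
    (U : Set ℝ) (hUb : Bornology.IsBounded U) (hdU : 0 < Metric.diam U)
    (n : ℕ) (hn : (max |a₁| |a₂|) ^ n ≤ Metric.diam U) :
    ∑ v ∈ (stopF |a₁| |a₂| (Metric.diam U) n []).filter
        (fun v => (F a₁ b₁ a₂ b₂ v '' Icc (0:ℝ) 1 ∩ U).Nonempty),
      ρ |a₁| |a₂| v ^ s ≤ (4 / min |a₁| |a₂|) * Metric.diam U ^ s := by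
  classical
  have ha₁0 : a₁ ≠ 0 := abs_pos.1 ha₁
  have ha₂0 : a₂ ≠ 0 := abs_pos.1 ha₂
  set r₁ := |a₁| with hr₁
  set r₂ := |a₂| with hr₂
  set d := Metric.diam U with hdd
  set rmin := min r₁ r₂ with hrmin
  have hrmin0 : 0 < rmin := lt_min ha₁ ha₂
  have hrmin1 : rmin ≤ 1 := le_trans (min_le_left _ _) ha₁'.le
  set T := (stopF r₁ r₂ d n []).filter
    (fun v => (F a₁ b₁ a₂ b₂ v '' Icc (0:ℝ) 1 ∩ U).Nonempty) with hT
  have hρle : ∀ v ∈ T, ρ r₁ r₂ v ≤ d := by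
    intro v hv
    exact stopF_le ha₁ ha₂ n [] (by simpa [ρ_nil] using hn) v (Finset.mem_filter.1 hv).1
  have hρge : ∀ v ∈ T, min 1 (rmin * d) ≤ ρ r₁ r₂ v := by
    intro v hv
    have := stopF_ge ha₁ ha₂ n [] v (Finset.mem_filter.1 hv).1
    simpa [ρ_nil] using this
  have hρpos : ∀ v, 0 < ρ r₁ r₂ v := ρ_pos ha₁ ha₂
  have hds : (0:ℝ) ≤ d ^ s := Real.rpow_nonneg Metric.diam_nonneg s
  have hρs_le : ∀ v ∈ T, ρ r₁ r₂ v ^ s ≤ d ^ s := fun v hv =>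
    Real.rpow_le_rpow (hρpos v).le (hρle v hv) hs0
  -- pairwise disjoint cylinders with known volume
  have hdisjT : (↑T : Set (List Bool)).PairwiseDisjoint
      (fun v => F a₁ b₁ a₂ b₂ v '' Icc (0:ℝ) 1) := by
    intro v hv v' hv' hne
    exact stopF_pairwise_disjoint hm₁ hm₂ hd ha₁0 ha₂0 n []
      v (Finset.mem_filter.1 hv).1 v' (Finset.mem_filter.1 hv').1 hne
  have himg : ∀ v : List Bool, ∃ c : ℝ,
      F a₁ b₁ a₂ b₂ v '' Icc (0:ℝ) 1 = Icc c (c + ρ r₁ r₂ v) :=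
    fun v => F_image_Icc ha₁0 ha₂0 v
  have hmeasT : ∀ v ∈ T, MeasurableSet (F a₁ b₁ a₂ b₂ v '' Icc (0:ℝ) 1) := by
    intro v _
    obtain ⟨c, hc⟩ := himg v
    rw [hc]; exact measurableSet_Icc
  have hvol : ∀ v : List Bool,
      volume (F a₁ b₁ a₂ b₂ v '' Icc (0:ℝ) 1) = ENNReal.ofReal (ρ r₁ r₂ v) := by
    intro v
    obtain ⟨c, hc⟩ := himg v
    rw [hc, Real.volume_Icc, add_sub_cancel_left]
  -- a generic cardinality bound from a volume bound
  have volsum : ∀ (B : Set ℝ), (∀ v ∈ T, F a₁ b₁ a₂ b₂ v '' Icc (0:ℝ) 1 ⊆ B) →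
      ∀ (vB : ℝ), 0 ≤ vB → volume B ≤ ENNReal.ofReal vB →
      ∑ v ∈ T, ρ r₁ r₂ v ≤ vB := by
    intro B hB vB hvB0 hvBle
    have h1 : volume (⋃ v ∈ T, F a₁ b₁ a₂ b₂ v '' Icc (0:ℝ) 1)
        = ∑ v ∈ T, volume (F a₁ b₁ a₂ b₂ v '' Icc (0:ℝ) 1) :=
      measure_biUnion_finset hdisjT hmeasT
    have h2 : (⋃ v ∈ T, F a₁ b₁ a₂ b₂ v '' Icc (0:ℝ) 1) ⊆ B := by
      simp only [iUnion_subset_iff]; exact hB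
    have h3 : ∑ v ∈ T, ENNReal.ofReal (ρ r₁ r₂ v) ≤ ENNReal.ofReal vB := by
      rw [← Finset.sum_congr rfl (fun v _ => hvol v), ← h1]
      exact le_trans (measure_mono h2) hvBle
    rw [← ENNReal.ofReal_sum_of_nonneg (fun v _ => (hρpos v).le)] at h3
    exact (ENNReal.ofReal_le_ofReal_iff hvB0).1 h3
  -- cardinality bound
  have hcard : (T.card : ℝ) ≤ 4 / rmin := by
    rcases le_or_gt d 1 with hd1 | hd1
    · -- small diameter: cylinders fit in a ball of radius 2d
      rcases T.eq_empty_or_nonempty with hTe | ⟨v₀, hv₀⟩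
      · simp [hTe]; positivity
      · obtain ⟨x₀, hx₀F, hx₀U⟩ := (Finset.mem_filter.1 hv₀).2
        have hB : ∀ v ∈ T, F a₁ b₁ a₂ b₂ v '' Icc (0:ℝ) 1 ⊆ Metric.closedBall x₀ (2 * d) := by
          intro v hv y hy
          obtain ⟨x, hxF, hxU⟩ := (Finset.mem_filter.1 hv).2
          obtain ⟨c, hc⟩ := himg v
          rw [hc] at hy hxF
          have hdyx : dist y x ≤ ρ r₁ r₂ v := by
            rw [Real.dist_eq]
            rw [mem_Icc] at hy hxF
            obtain ⟨hy1, hy2⟩ := hy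
            obtain ⟨hx1, hx2⟩ := hxF
            rw [abs_sub_le_iff]
            exact ⟨by linarith, by linarith⟩
          have hxx₀ : dist x x₀ ≤ d := Metric.dist_le_diam_of_mem hUb hxU hx₀U
          have : dist y x₀ ≤ ρ r₁ r₂ v + d := le_trans (dist_triangle y x x₀)
            (add_le_add hdyx hxx₀)
          exact Metric.mem_closedBall.2 (le_trans this (by linarith [hρle v hv]))
        have hsum : ∑ v ∈ T, ρ r₁ r₂ v ≤ 4 * d := by
          refine volsum _ hB (4 * d) (by linarith) ?_
          rw [Real.volume_closedBall]
          exact ENNReal.ofReal_le_ofReal (by linarith)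
        have hlow : ∀ v ∈ T, rmin * d ≤ ρ r₁ r₂ v := by
          intro v hv
          have := hρge v hv
          have hmin : min 1 (rmin * d) = rmin * d := min_eq_right (by nlinarith)
          linarith [hmin ▸ this]
        have : (T.card : ℝ) * (rmin * d) ≤ 4 * d := by
          calc (T.card : ℝ) * (rmin * d) ≤ ∑ v ∈ T, ρ r₁ r₂ v := by
                have := Finset.card_nsmul_le_sum T _ _ hlow
                simpa [nsmul_eq_mul] using this
            _ ≤ 4 * d := hsum
        have h5 : (T.card : ℝ) * rmin * d ≤ 4 * d := by nlinarith
        have h6 : (T.card : ℝ) * rmin ≤ 4 := le_of_mul_le_mul_right (by linarith) hdU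
        exact (le_div_iff₀ hrmin0).2 h6
    · -- large diameter: cylinders fit in the unit interval
      have hB : ∀ v ∈ T, F a₁ b₁ a₂ b₂ v '' Icc (0:ℝ) 1 ⊆ Icc (0:ℝ) 1 :=
        fun v _ => (F_mapsTo hm₁ hm₂ v).image_subset
      have hsum : ∑ v ∈ T, ρ r₁ r₂ v ≤ 1 := by
        refine volsum _ hB 1 zero_le_one ?_
        rw [Real.volume_Icc]; norm_num
      have hlow : ∀ v ∈ T, rmin ≤ ρ r₁ r₂ v := by
        intro v hv
        refine le_trans ?_ (hρge v hv)
        exact le_min hrmin1 (by nlinarith)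
      have h4 : (T.card : ℝ) * rmin ≤ 1 := by
        calc (T.card : ℝ) * rmin ≤ ∑ v ∈ T, ρ r₁ r₂ v := by
              have := Finset.card_nsmul_le_sum T _ _ hlow
              simpa [nsmul_eq_mul] using this
          _ ≤ 1 := hsum
      exact (le_div_iff₀ hrmin0).2 (by linarith)
  calc ∑ v ∈ T, ρ r₁ r₂ v ^ s ≤ ∑ _v ∈ T, d ^ s := Finset.sum_le_sum hρs_le
    _ = (T.card : ℝ) * d ^ s := by rw [Finset.sum_const, nsmul_eq_mul]
    _ ≤ (4 / rmin) * d ^ s := mul_le_mul_of_nonneg_right hcard hds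

end MoranAux


open Real Set MoranAux MoranAux2 Metric MeasureTheory Filter

namespace MoranAux

variable {a₁ b₁ a₂ b₂ : ℝ} {K : Set ℝ}

lemma sum_biUnion_le {f : List Bool → ℝ} (hf : ∀ x, 0 ≤ f x) (J : Finset ℕ)
    (T : ℕ → Finset (List Bool)) :
    ∑ w ∈ J.biUnion T, f w ≤ ∑ j ∈ J, ∑ w ∈ T j, f w := by
  classical
  induction J using Finset.induction with
  | empty => simp
  | insert a J hj ih =>
      rw [Finset.biUnion_insert, Finset.sum_insert hj]
      calc ∑ w ∈ T a ∪ J.biUnion T, f w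
          ≤ ∑ w ∈ T a, f w + ∑ w ∈ J.biUnion T, f w := by
            have := Finset.sum_union_inter (s₁ := T a) (s₂ := J.biUnion T) (f := f)
            have hnn : 0 ≤ ∑ w ∈ T a ∩ J.biUnion T, f w :=
              Finset.sum_nonneg fun w _ => hf w
            linarith
        _ ≤ ∑ w ∈ T a, f w + ∑ j ∈ J, ∑ w ∈ T j, f w := by linarith [ih]

open scoped Classical in
/-- The mass distribution principle: lower bound for the Hausdorff measure of `K`. -/
lemma hausdorff_lower (ha₁ : 0 < |a₁|) (ha₁' : |a₁| < 1) (ha₂ : 0 < |a₂|) (ha₂' : |a₂| < 1)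
    (hm₁ : MapsTo (fun x => a₁ * x + b₁) (Icc (0:ℝ) 1) (Icc (0:ℝ) 1))
    (hm₂ : MapsTo (fun x => a₂ * x + b₂) (Icc (0:ℝ) 1) (Icc (0:ℝ) 1))
    (hd : Disjoint ((fun x => a₁ * x + b₁) '' Icc (0:ℝ) 1)
      ((fun x => a₂ * x + b₂) '' Icc (0:ℝ) 1))
    (hKc : IsCompact K) (hKne : K.Nonempty) (hKI : K ⊆ Icc (0:ℝ) 1)
    (hK₁ : (fun x => a₁ * x + b₁) '' K ⊆ K) (hK₂ : (fun x => a₂ * x + b₂) '' K ⊆ K)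
    (hKattr : K = (fun x => a₁ * x + b₁) '' K ∪ (fun x => a₂ * x + b₂) '' K)
    {s : ℝ} (hs0 : 0 < s) (hs : |a₁| ^ s + |a₂| ^ s = 1) :
    ENNReal.ofReal (min |a₁| |a₂| / 4) ≤ μH[s] K := by
  have ha₁0 : a₁ ≠ 0 := abs_pos.1 ha₁
  have ha₂0 : a₂ ≠ 0 := abs_pos.1 ha₂
  set r₁ := |a₁| with hr₁
  set r₂ := |a₂| with hr₂
  set rmin := min r₁ r₂ with hrmin
  have hrmin0 : 0 < rmin := lt_min ha₁ ha₂
  have hrmax1 : max r₁ r₂ < 1 := max_lt ha₁' ha₂'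
  have hrmax0 : 0 ≤ max r₁ r₂ := le_max_of_le_left ha₁.le
  -- main claim about arbitrary countable covers
  have claim0 : ∀ t : ℕ → Set ℝ, K ⊆ ⋃ n, t n →
      ENNReal.ofReal (rmin / 4) ≤ ∑' n, ⨆ _ : (t n).Nonempty, EMetric.diam (t n) ^ s := by
    intro t htK
    set S := ∑' n, ⨆ _ : (t n).Nonempty, EMetric.diam (t n) ^ s with hS
    by_cases htop : ∃ n, EMetric.diam (t n) = ⊤
    · obtain ⟨n, hn⟩ := htop
      have hne : (t n).Nonempty := by
        rcases (t n).eq_empty_or_nonempty with h | h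
        · rw [h] at hn; simp [EMetric.diam] at hn
        · exact h
      have : (⨆ _ : (t n).Nonempty, EMetric.diam (t n) ^ s) = ⊤ := by
        rw [iSup_pos hne, hn, ENNReal.top_rpow_of_pos hs0]
      refine le_trans ?_ (ENNReal.le_tsum n)
      rw [this]; exact le_top
    · push_neg at htop
      have hb : ∀ n, Bornology.IsBounded (t n) := fun n =>
        Metric.isBounded_iff_ediam_ne_top.2 (htop n)
      set d : ℕ → ℝ := fun n => Metric.diam (t n) with hdn
      have hd0 : ∀ n, 0 ≤ d n := fun n => Metric.diam_nonneg
      -- It suffices to prove the bound up to ε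
      have claim : ∀ ε : ℝ, 0 < ε → ENNReal.ofReal (rmin / 4 - ε) ≤ S := by
        intro ε hε
        -- choose thickening radii
        have hex : ∀ n : ℕ, ∃ δ : ℝ, 0 < δ ∧ (d n + 2 * δ) ^ s ≤ d n ^ s + ε / 2 / 2 ^ n := by
          intro n
          have hcont : ContinuousAt (fun x : ℝ => (d n + 2 * x) ^ s) 0 := by
            apply ContinuousAt.rpow_const
            · exact (continuous_const.add (continuous_const.mul continuous_id)).continuousAt
            · right; exact hs0.le
          have hlt : (fun x : ℝ => (d n + 2 * x) ^ s) 0 < d n ^ s + ε / 2 / 2 ^ n := by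
            simp only [mul_zero, add_zero]
            have : (0:ℝ) < ε / 2 / 2 ^ n := by positivity
            linarith
          have hev := hcont.eventually_lt continuousAt_const hlt
          rw [Metric.eventually_nhds_iff] at hev
          obtain ⟨δ', hδ'pos, hδ'⟩ := hev
          refine ⟨δ' / 2, by positivity, ?_⟩
          have := hδ' (y := δ' / 2) (by
            rw [Real.dist_eq, sub_zero, abs_of_pos (by linarith)]
            linarith)
          exact this.le
        choose δ hδ0 hδ using hex
        set V : ℕ → Set ℝ := fun n => Metric.thickening (δ n) (t n) with hV
        have hVopen : ∀ n, IsOpen (V n) := fun n => Metric.isOpen_thickening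
        have hcov : K ⊆ ⋃ n, V n :=
          htK.trans (iUnion_mono fun n => Metric.self_subset_thickening (hδ0 n) _)
        obtain ⟨J, hJ⟩ := hKc.elim_finite_subcover V hVopen hcov
        set J' := J.filter (fun n => (t n).Nonempty) with hJ'
        have hJ'cov : K ⊆ ⋃ n ∈ J', V n := by
          intro x hx
          have := hJ hx
          simp only [mem_iUnion, exists_prop] at this ⊢
          obtain ⟨n, hn, hxn⟩ := this
          refine ⟨n, Finset.mem_filter.2 ⟨hn, ?_⟩, hxn⟩
          rcases (t n).eq_empty_or_nonempty with h | h
          · rw [hV] at hxn; simp only [h, Metric.thickening_empty] at hxn; exact absurd hxn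
              (notMem_empty x)
          · exact h
        have hVb : ∀ n, Bornology.IsBounded (V n) := fun n => (hb n).thickening
        have hVd : ∀ n ∈ J', 0 < Metric.diam (V n) := by
          intro n hn
          obtain ⟨x, hx⟩ := (Finset.mem_filter.1 hn).2
          have h1 : x ∈ V n := Metric.self_subset_thickening (hδ0 n) _ hx
          have h2 : x + δ n / 2 ∈ V n := by
            rw [hV, Metric.mem_thickening_iff]
            refine ⟨x, hx, ?_⟩
            rw [Real.dist_eq, show x + δ n / 2 - x = δ n / 2 by ring,
              abs_of_pos (by linarith [hδ0 n])]
            linarith [hδ0 n]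
          have h3 : dist (x + δ n / 2) x ≤ Metric.diam (V n) :=
            Metric.dist_le_diam_of_mem (hVb n) h2 h1
          rw [Real.dist_eq, show x + δ n / 2 - x = δ n / 2 by ring,
            abs_of_pos (by linarith [hδ0 n])] at h3
          linarith [hδ0 n]
        have hVdle : ∀ n, Metric.diam (V n) ≤ d n + 2 * δ n := fun n =>
          Metric.diam_thickening_le _ (hδ0 n).le
        -- stopping depth for each cover set
        have hmx : ∀ n ∈ J', ∃ m : ℕ, (max r₁ r₂) ^ m < Metric.diam (V n) := by
          intro n hn
          exact exists_pow_lt_of_lt_one (hVd n hn) hrmax1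
        choose! m hm using hmx
        set T : ℕ → Finset (List Bool) := fun n =>
          (stopF r₁ r₂ (Metric.diam (V n)) (m n) []).filter
            (fun v => (F a₁ b₁ a₂ b₂ v '' Icc (0:ℝ) 1 ∩ V n).Nonempty) with hT
        set W := J'.biUnion T with hW
        have hWcov : K ⊆ ⋃ w ∈ W, F a₁ b₁ a₂ b₂ w '' Icc (0:ℝ) 1 := by
          intro x hx
          have := hJ'cov hx
          simp only [mem_iUnion, exists_prop] at this
          obtain ⟨n, hn, hxn⟩ := this
          have hxid : x ∈ F a₁ b₁ a₂ b₂ [] '' K := ⟨x, hx, rfl⟩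
          have := stopF_cover (r₁ := r₁) (r₂ := r₂) (d := Metric.diam (V n)) hKattr hKI (m n) [] hxid
          simp only [mem_iUnion, exists_prop] at this ⊢
          obtain ⟨v, hv, hxv⟩ := this
          refine ⟨v, Finset.mem_biUnion.2 ⟨n, hn, ?_⟩, hxv⟩
          exact Finset.mem_filter.2 ⟨hv, ⟨x, hxv, hxn⟩⟩
        have h1 : 1 ≤ ∑ w ∈ W, ρ r₁ r₂ w ^ s :=
          one_le_sum_mass hm₁ hm₂ hd hKne hKI hK₁ hK₂ ha₁0 ha₂0 hs W hWcov
        have h2 : ∑ w ∈ W, ρ r₁ r₂ w ^ s ≤ ∑ n ∈ J', ∑ w ∈ T n, ρ r₁ r₂ w ^ s :=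
          sum_biUnion_le (fun w => Real.rpow_nonneg (ρ_pos ha₁ ha₂ w).le s) J' T
        have h3 : ∀ n ∈ J', ∑ w ∈ T n, ρ r₁ r₂ w ^ s
            ≤ (4 / rmin) * Metric.diam (V n) ^ s := by
          intro n hn
          exact mass_of_set_le ha₁ ha₁' ha₂ ha₂' hm₁ hm₂ hd hs0.le (V n) (hVb n)
            (hVd n hn) (m n) (hm n hn).le
        have h4 : ∀ n ∈ J', Metric.diam (V n) ^ s ≤ d n ^ s + ε / 2 / 2 ^ n := by
          intro n hn
          refine le_trans (Real.rpow_le_rpow Metric.diam_nonneg (hVdle n) hs0.le) (hδ n)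
        have h5 : ∑ n ∈ J', (ε / 2 / 2 ^ n) ≤ ε := by
          have hsummable : Summable (fun n : ℕ => ε / 2 / 2 ^ n) := by
            have := summable_geometric_two' ε
            exact this
          have := Summable.sum_le_tsum J' (fun n _ => by positivity) hsummable
          rw [tsum_geometric_two' ε] at this
          exact this
        have h6 : 1 ≤ (4 / rmin) * (∑ n ∈ J', d n ^ s + ε) := by
          calc (1:ℝ) ≤ ∑ w ∈ W, ρ r₁ r₂ w ^ s := h1
            _ ≤ ∑ n ∈ J', ∑ w ∈ T n, ρ r₁ r₂ w ^ s := h2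
            _ ≤ ∑ n ∈ J', (4 / rmin) * Metric.diam (V n) ^ s := Finset.sum_le_sum h3
            _ ≤ ∑ n ∈ J', (4 / rmin) * (d n ^ s + ε / 2 / 2 ^ n) := by
                refine Finset.sum_le_sum fun n hn => ?_
                exact mul_le_mul_of_nonneg_left (h4 n hn) (by positivity)
            _ = (4 / rmin) * (∑ n ∈ J', (d n ^ s + ε / 2 / 2 ^ n)) := by
                rw [Finset.mul_sum]
            _ ≤ (4 / rmin) * (∑ n ∈ J', d n ^ s + ε) := by
                refine mul_le_mul_of_nonneg_left ?_ (by positivity)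
                rw [Finset.sum_add_distrib]
                linarith [h5]
        have h7 : rmin / 4 - ε ≤ ∑ n ∈ J', d n ^ s := by
          have h8 : rmin / 4 ≤ ∑ n ∈ J', d n ^ s + ε := by
            have h9 : (0:ℝ) < 4 / rmin := by positivity
            have := mul_le_mul_of_nonneg_left h6 (le_of_lt (by positivity : (0:ℝ) < rmin / 4))
            rw [show rmin / 4 * ((4 / rmin) * (∑ n ∈ J', d n ^ s + ε))
                = ∑ n ∈ J', d n ^ s + ε by field_simp] at this
            linarith
          linarith
        -- convert to ENNReal
        calc ENNReal.ofReal (rmin / 4 - ε) ≤ ENNReal.ofReal (∑ n ∈ J', d n ^ s) :=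
              ENNReal.ofReal_le_ofReal h7
          _ = ∑ n ∈ J', ENNReal.ofReal (d n ^ s) :=
              ENNReal.ofReal_sum_of_nonneg (fun n _ => Real.rpow_nonneg (hd0 n) s)
          _ ≤ S := by
              refine le_trans (Finset.sum_le_sum fun n hn => ?_) (ENNReal.sum_le_tsum J')
              have hne : (t n).Nonempty := (Finset.mem_filter.1 hn).2
              rw [iSup_pos hne]
              have hed : EMetric.diam (t n) = ENNReal.ofReal (d n) := by
                rw [hdn]
                simp only []
                rw [Metric.diam]; exact (ENNReal.ofReal_toReal (htop n)).symm
              rw [hed, ← ENNReal.ofReal_rpow_of_nonneg (hd0 n) hs0.le]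
      -- remove ε
      by_contra hcon
      push_neg at hcon
      have hSne : S ≠ ⊤ := by
        intro h; rw [h] at hcon; exact (not_le.2 hcon) le_top
      set σ := S.toReal with hσ
      have hσ0 : 0 ≤ σ := ENNReal.toReal_nonneg
      have hSσ : S = ENNReal.ofReal σ := (ENNReal.ofReal_toReal hSne).symm
      have hσlt : σ < rmin / 4 := by
        by_contra h
        push_neg at h
        exact (not_le.2 hcon) (hSσ ▸ ENNReal.ofReal_le_ofReal h |>.trans_eq' (by rfl)
          |>.trans (le_refl _) |> fun hh => hh)
      set ε := (rmin / 4 - σ) / 2 with hε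
      have hεpos : 0 < ε := by simp [hε]; linarith
      have := claim ε hεpos
      rw [hSσ] at this
      have := (ENNReal.ofReal_le_ofReal_iff hσ0).1 this
      simp only [hε] at this
      linarith
  -- wire into the definition of Hausdorff measure
  rw [MeasureTheory.Measure.hausdorffMeasure_apply]
  refine le_iSup₂_of_le ⊤ (by norm_num) ?_
  exact le_iInf fun t => le_iInf fun htK => le_iInf fun _ => claim0 t htK

end MoranAux


open Real Set MoranAux MoranAux2 Metric MeasureTheory Filter
open scoped ENNReal NNReal

namespace MoranAux

variable {a₁ b₁ a₂ b₂ : ℝ} {K : Set ℝ}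

/-- Upper bound for the Hausdorff measure of `K` in the Moran dimension. -/
lemma hausdorff_upper (ha₁ : 0 < |a₁|) (ha₁' : |a₁| < 1) (ha₂ : 0 < |a₂|) (ha₂' : |a₂| < 1)
    (hKI : K ⊆ Icc (0:ℝ) 1)
    (hKattr : K = (fun x => a₁ * x + b₁) '' K ∪ (fun x => a₂ * x + b₂) '' K)
    {s : ℝ} (hs0 : 0 ≤ s) (hs : |a₁| ^ s + |a₂| ^ s = 1) :
    μH[s] K ≤ 1 := by
  have ha₁0 : a₁ ≠ 0 := abs_pos.1 ha₁
  have ha₂0 : a₂ ≠ 0 := abs_pos.1 ha₂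
  set r₁ := |a₁| with hr₁
  set r₂ := |a₂| with hr₂
  have hrmax1 : max r₁ r₂ < 1 := max_lt ha₁' ha₂'
  have hrmax0 : 0 ≤ max r₁ r₂ := le_max_of_le_left ha₁.le
  have key := MeasureTheory.Measure.hausdorffMeasure_le_liminf_sum (X := ℝ)
    (ι := fun n : ℕ => {w : List Bool // w ∈ Words n}) s K (l := atTop)
    (fun n => ENNReal.ofReal ((max r₁ r₂) ^ n))
    (by
      have h := tendsto_pow_atTop_nhds_zero_of_lt_one hrmax0 hrmax1
      simpa using ENNReal.tendsto_ofReal h)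
    (fun n w => F a₁ b₁ a₂ b₂ w.1 '' K)
    (by
      refine Eventually.of_forall fun n => fun w => ?_
      -- each cylinder has small diameter
      have hlip : LipschitzWith (ρ r₁ r₂ w.1).toNNReal (F a₁ b₁ a₂ b₂ w.1) := by
        apply LipschitzWith.of_dist_le_mul
        intro x y
        rw [Real.dist_eq, Real.dist_eq, F_dist ha₁0 ha₂0,
          Real.coe_toNNReal _ (ρ_pos ha₁ ha₂ w.1).le]
      have h1 : EMetric.diam (F a₁ b₁ a₂ b₂ w.1 '' K)
          ≤ (ρ r₁ r₂ w.1).toNNReal * EMetric.diam K := hlip.ediam_image_le K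
      have h2 : EMetric.diam K ≤ 1 := by
        refine le_trans (EMetric.diam_mono hKI) ?_
        rw [Real.ediam_Icc]; norm_num
      have h3 : ((ρ r₁ r₂ w.1).toNNReal : ℝ≥0∞) = ENNReal.ofReal (ρ r₁ r₂ w.1) := rfl
      calc EMetric.diam (F a₁ b₁ a₂ b₂ w.1 '' K)
          ≤ (ρ r₁ r₂ w.1).toNNReal * EMetric.diam K := h1
        _ ≤ (ρ r₁ r₂ w.1).toNNReal * 1 := by
            exact mul_le_mul_right h2 _
        _ = ENNReal.ofReal (ρ r₁ r₂ w.1) := by rw [mul_one, h3]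
        _ ≤ ENNReal.ofReal ((max r₁ r₂) ^ n) := by
            refine ENNReal.ofReal_le_ofReal ?_
            have := ρ_le_pow ha₁ ha₂ w.1
            rwa [mem_Words.1 w.2] at this)
    (by
      refine Eventually.of_forall fun n => ?_
      intro x hx
      have := K_cover hKattr n hx
      simp only [mem_iUnion, exists_prop] at this ⊢
      obtain ⟨w, hw, hxw⟩ := this
      exact ⟨⟨w, hw⟩, hxw⟩)
  refine le_trans key ?_
  have hbound : ∀ n : ℕ, (∑ w : {w : List Bool // w ∈ Words n},
      EMetric.diam (F a₁ b₁ a₂ b₂ w.1 '' K) ^ s) ≤ 1 := by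
    intro n
    have hstep : ∀ w : {w : List Bool // w ∈ Words n},
        EMetric.diam (F a₁ b₁ a₂ b₂ w.1 '' K) ^ s ≤ ENNReal.ofReal (ρ r₁ r₂ w.1 ^ s) := by
      intro w
      have hlip : LipschitzWith (ρ r₁ r₂ w.1).toNNReal (F a₁ b₁ a₂ b₂ w.1) := by
        apply LipschitzWith.of_dist_le_mul
        intro x y
        rw [Real.dist_eq, Real.dist_eq, F_dist ha₁0 ha₂0,
          Real.coe_toNNReal _ (ρ_pos ha₁ ha₂ w.1).le]
      have h1 : EMetric.diam (F a₁ b₁ a₂ b₂ w.1 '' K) ≤ ENNReal.ofReal (ρ r₁ r₂ w.1) := by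
        have h2 : EMetric.diam K ≤ 1 := by
          refine le_trans (EMetric.diam_mono hKI) ?_
          rw [Real.ediam_Icc]; norm_num
        calc EMetric.diam (F a₁ b₁ a₂ b₂ w.1 '' K)
            ≤ (ρ r₁ r₂ w.1).toNNReal * EMetric.diam K := hlip.ediam_image_le K
          _ ≤ (ρ r₁ r₂ w.1).toNNReal * 1 := mul_le_mul_right h2 _
          _ = ENNReal.ofReal (ρ r₁ r₂ w.1) := by rw [mul_one]; rfl
      calc EMetric.diam (F a₁ b₁ a₂ b₂ w.1 '' K) ^ s
          ≤ ENNReal.ofReal (ρ r₁ r₂ w.1) ^ s := by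
            exact ENNReal.rpow_le_rpow h1 hs0
        _ = ENNReal.ofReal (ρ r₁ r₂ w.1 ^ s) :=
            ENNReal.ofReal_rpow_of_nonneg (ρ_pos ha₁ ha₂ w.1).le hs0
    calc (∑ w : {w : List Bool // w ∈ Words n}, EMetric.diam (F a₁ b₁ a₂ b₂ w.1 '' K) ^ s)
        ≤ ∑ w : {w : List Bool // w ∈ Words n}, ENNReal.ofReal (ρ r₁ r₂ w.1 ^ s) :=
          Finset.sum_le_sum fun w _ => hstep w
      _ = ∑ w ∈ Words n, ENNReal.ofReal (ρ r₁ r₂ w ^ s) := by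
          rw [← Finset.sum_coe_sort (Words n) (fun w => ENNReal.ofReal (ρ r₁ r₂ w ^ s))]
      _ = ENNReal.ofReal (∑ w ∈ Words n, ρ r₁ r₂ w ^ s) :=
          (ENNReal.ofReal_sum_of_nonneg fun w _ =>
            Real.rpow_nonneg (ρ_pos ha₁ ha₂ w).le s).symm
      _ = 1 := by rw [sum_Words ha₁ ha₂ hs n, ENNReal.ofReal_one]
  exact liminf_le_of_frequently_le (Frequently.of_forall hbound)

/-- Disjointness of the images forces the contraction ratios to sum to less than `1`. -/
lemma ratio_sum_lt_one (ha₁ : 0 < |a₁|) (ha₂ : 0 < |a₂|)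
    (hm₁ : MapsTo (fun x => a₁ * x + b₁) (Icc (0:ℝ) 1) (Icc (0:ℝ) 1))
    (hm₂ : MapsTo (fun x => a₂ * x + b₂) (Icc (0:ℝ) 1) (Icc (0:ℝ) 1))
    (hd : Disjoint ((fun x => a₁ * x + b₁) '' Icc (0:ℝ) 1)
      ((fun x => a₂ * x + b₂) '' Icc (0:ℝ) 1)) :
    |a₁| + |a₂| < 1 := by
  have ha₁0 : a₁ ≠ 0 := abs_pos.1 ha₁
  have ha₂0 : a₂ ≠ 0 := abs_pos.1 ha₂
  obtain ⟨p₁, hp₁⟩ := affine_image' (A := a₁) (B := b₁) ha₁0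
  obtain ⟨p₂, hp₂⟩ := affine_image' (A := a₂) (B := b₂) ha₂0
  have hsub₁ : Icc p₁ (p₁ + |a₁|) ⊆ Icc (0:ℝ) 1 := hp₁ ▸ hm₁.image_subset
  have hsub₂ : Icc p₂ (p₂ + |a₂|) ⊆ Icc (0:ℝ) 1 := hp₂ ▸ hm₂.image_subset
  have hmem₁ : p₁ ∈ Icc (0:ℝ) 1 := hsub₁ ⟨le_refl _, by linarith [abs_nonneg a₁]⟩
  have hmem₁' : p₁ + |a₁| ∈ Icc (0:ℝ) 1 := hsub₁ ⟨by linarith [abs_nonneg a₁], le_refl _⟩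
  have hmem₂ : p₂ ∈ Icc (0:ℝ) 1 := hsub₂ ⟨le_refl _, by linarith [abs_nonneg a₂]⟩
  have hmem₂' : p₂ + |a₂| ∈ Icc (0:ℝ) 1 := hsub₂ ⟨by linarith [abs_nonneg a₂], le_refl _⟩
  have hdisj : Disjoint (Icc p₁ (p₁ + |a₁|)) (Icc p₂ (p₂ + |a₂|)) := by
    rw [← hp₁, ← hp₂]; exact hd
  have hsep : p₁ + |a₁| < p₂ ∨ p₂ + |a₂| < p₁ := by
    by_contra h
    push_neg at h
    obtain ⟨h1, h2⟩ := h
    have hx1 : max p₁ p₂ ∈ Icc p₁ (p₁ + |a₁|) :=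
      ⟨le_max_left _ _, max_le (by linarith [abs_nonneg a₁]) h1⟩
    have hx2 : max p₁ p₂ ∈ Icc p₂ (p₂ + |a₂|) :=
      ⟨le_max_right _ _, max_le h2 (by linarith [abs_nonneg a₂])⟩
    exact Set.disjoint_left.1 hdisj hx1 hx2
  obtain ⟨h0₁, h1₁⟩ := mem_Icc.1 hmem₁
  obtain ⟨h0₁', h1₁'⟩ := mem_Icc.1 hmem₁'
  obtain ⟨h0₂, h1₂⟩ := mem_Icc.1 hmem₂
  obtain ⟨h0₂', h1₂'⟩ := mem_Icc.1 hmem₂'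
  rcases hsep with h | h
  · linarith
  · linarith

end MoranAux


open Real Set
open scoped NNReal ENNReal MeasureTheory

/-- Moran's formula for two affine contractions of `[0,1]` with disjoint images:
`|a₁|^s + |a₂|^s = 1` has a unique solution `s ∈ (0,1)`, which equals the Hausdorff
dimension of the attractor `K = f₁(K) ∪ f₂(K)`. -/
theorem moran_two_affine (a₁ b₁ a₂ b₂ : ℝ)
    (ha₁ : 0 < |a₁|) (ha₁' : |a₁| < 1) (ha₂ : 0 < |a₂|) (ha₂' : |a₂| < 1)
    (f₁ f₂ : ℝ → ℝ) (hf₁ : ∀ x, f₁ x = a₁ * x + b₁) (hf₂ : ∀ x, f₂ x = a₂ * x + b₂)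
    (hmaps₁ : MapsTo f₁ (Icc (0:ℝ) 1) (Icc (0:ℝ) 1))
    (hmaps₂ : MapsTo f₂ (Icc (0:ℝ) 1) (Icc (0:ℝ) 1))
    (hdisj : Disjoint (f₁ '' Icc (0:ℝ) 1) (f₂ '' Icc (0:ℝ) 1))
    (K : Set ℝ) (hK : K.Nonempty) (hKc : IsCompact K)
    (hKattr : K = f₁ '' K ∪ f₂ '' K) :
    (∃! s : ℝ, s ∈ Ioo (0:ℝ) 1 ∧ |a₁| ^ s + |a₂| ^ s = 1) ∧
      ∀ s : ℝ, s ∈ Ioo (0:ℝ) 1 → |a₁| ^ s + |a₂| ^ s = 1 →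
        dimH K = ENNReal.ofReal s := by
  have hf₁' : f₁ = fun x => a₁ * x + b₁ := funext hf₁
  have hf₂' : f₂ = fun x => a₂ * x + b₂ := funext hf₂
  subst hf₁' hf₂'
  have hK₁ : (fun x => a₁ * x + b₁) '' K ⊆ K := by
    have h := Set.subset_union_left (s := (fun x => a₁ * x + b₁) '' K)
      (t := (fun x => a₂ * x + b₂) '' K)
    rwa [← hKattr] at h
  have hK₂ : (fun x => a₂ * x + b₂) '' K ⊆ K := by
    have h := Set.subset_union_right (s := (fun x => a₁ * x + b₁) '' K)
      (t := (fun x => a₂ * x + b₂) '' K)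
    rwa [← hKattr] at h
  have hKI : K ⊆ Icc (0:ℝ) 1 :=
    MoranAux.K_subset_Icc ha₁' ha₂' hmaps₁ hmaps₂ hKc hK hKattr
  have hlt : |a₁| + |a₂| < 1 := MoranAux.ratio_sum_lt_one ha₁ ha₂ hmaps₁ hmaps₂ hdisj
  set g : ℝ → ℝ := fun u => |a₁| ^ u + |a₂| ^ u with hg
  have hgc : Continuous g := by
    have c1 : Continuous fun u : ℝ => |a₁| ^ u :=
      continuous_iff_continuousAt.2 fun x => Real.continuousAt_const_rpow ha₁.ne'
    have c2 : Continuous fun u : ℝ => |a₂| ^ u :=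
      continuous_iff_continuousAt.2 fun x => Real.continuousAt_const_rpow ha₂.ne'
    exact c1.add c2
  have hanti : ∀ u v : ℝ, u < v → g v < g u := fun u v huv =>
    add_lt_add (Real.rpow_lt_rpow_of_exponent_gt ha₁ ha₁' huv)
      (Real.rpow_lt_rpow_of_exponent_gt ha₂ ha₂' huv)
  have hg1 : g 1 = |a₁| + |a₂| := by simp [hg]
  have hg0 : g 0 = 2 := by norm_num [hg]
  have hIVT := intermediate_value_Ioo' (zero_le_one) hgc.continuousOn (a := (0:ℝ)) (b := 1)
  have h1mem : (1:ℝ) ∈ Ioo (g 1) (g 0) := by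
    rw [hg1, hg0]; exact ⟨hlt, by norm_num⟩
  obtain ⟨s₀, hs₀mem, hs₀eq⟩ := hIVT h1mem
  have huniq : ∀ y : ℝ, y ∈ Ioo (0:ℝ) 1 ∧ |a₁| ^ y + |a₂| ^ y = 1 → y = s₀ := by
    rintro y ⟨_, hy2⟩
    rcases lt_trichotomy y s₀ with h | h | h
    · have h1 : g s₀ < g y := hanti y s₀ h
      have : (1:ℝ) < 1 := by
        calc (1:ℝ) = g s₀ := hs₀eq.symm
          _ < g y := h1
          _ = 1 := hy2
      exact absurd this (lt_irrefl 1)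
    · exact h
    · have h1 : g y < g s₀ := hanti s₀ y h
      have : (1:ℝ) < 1 := by
        calc (1:ℝ) = g y := hy2.symm
          _ < g s₀ := h1
          _ = 1 := hs₀eq
      exact absurd this (lt_irrefl 1)
  refine ⟨⟨s₀, ⟨hs₀mem, hs₀eq⟩, huniq⟩, ?_⟩
  intro s hsmem hseq
  have hs0 : 0 < s := hsmem.1
  have upper := MoranAux.hausdorff_upper ha₁ ha₁' ha₂ ha₂' hKI hKattr hs0.le hseq
  have lower := MoranAux.hausdorff_lower ha₁ ha₁' ha₂ ha₂' hmaps₁ hmaps₂ hdisj hKc hK hKI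
    hK₁ hK₂ hKattr hs0 hseq
  set dd : ℝ≥0 := s.toNNReal with hdd
  have hds : (dd : ℝ) = s := Real.coe_toNNReal s hs0.le
  have hofReal : ENNReal.ofReal s = (dd : ℝ≥0∞) := rfl
  apply le_antisymm
  · have hne : μH[(dd : ℝ)] K ≠ ⊤ := by
      rw [hds]
      intro h
      rw [h] at upper
      exact absurd upper (by simp)
    have := dimH_le_of_hausdorffMeasure_ne_top hne
    rwa [hofReal]
  · have hpos : (0:ℝ≥0∞) < ENNReal.ofReal (min |a₁| |a₂| / 4) := by
      rw [ENNReal.ofReal_pos]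
      have : 0 < min |a₁| |a₂| := lt_min ha₁ ha₂
      linarith
    have hne0 : μH[(dd : ℝ)] K ≠ 0 := by
      rw [hds]
      exact ne_of_gt (lt_of_lt_of_le hpos lower)
    have := le_dimH_of_hausdorffMeasure_ne_zero hne0
    rwa [hofReal]
end

section
/- Continuity of the root map: under the same hypotheses on P_1,…,P_k (uniform decreasing slope at least log λ > 0, zeros in [0,1]), the map Root : Δ → [0,1], sending α to the unique zero of ∑_j α_j P_j, is continuous; in fact |Root(α) − Root(β)| ≤ (M/log λ)·∑_j |α_j − β_j| where M = max_j max_{s∈[0,1]} |P_j(s)|. -/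
open Real Set

/-- Key one-sided estimate. -/
lemma root_aux {ι : Type*} [Fintype ι]
    (P : ι → ℝ → ℝ) (lam M : ℝ) (hlam : 1 < lam)
    (hslope : ∀ j, ∀ s r : ℝ, 0 ≤ s → 0 < r → s + r ≤ 1 →
      P j (s + r) ≤ P j s - r * Real.log lam)
    (hM : ∀ j, ∀ s ∈ Icc (0:ℝ) 1, |P j s| ≤ M)
    (α β : ι → ℝ) (hα : ∀ j, 0 ≤ α j) (hαsum : ∑ j : ι, α j = 1)
    (tα tβ : ℝ) (htα : tα ∈ Icc (0:ℝ) 1) (htβ : tβ ∈ Icc (0:ℝ) 1)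
    (hrootα : ∑ j : ι, α j * P j tα = 0) (hrootβ : ∑ j : ι, β j * P j tβ = 0)
    (hle : tα < tβ) :
    tβ - tα ≤ (M / Real.log lam) * ∑ j : ι, |α j - β j| := by
  have hlog : 0 < Real.log lam := Real.log_pos hlam
  set r := tβ - tα with hr
  have hrpos : 0 < r := by simpa [hr] using hle
  -- slope estimate for the α-combination
  have h1 : ∑ j : ι, α j * P j tβ ≤ - r * Real.log lam := by
    have key : ∀ j, α j * P j tβ ≤ α j * (P j tα - r * Real.log lam) := by
      intro j
      refine mul_le_mul_of_nonneg_left ?_ (hα j)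
      have := hslope j tα r htα.1 hrpos (by rw [hr]; linarith [htβ.2])
      have heq : tα + r = tβ := by rw [hr]; ring
      rwa [heq] at this
    calc ∑ j : ι, α j * P j tβ ≤ ∑ j : ι, α j * (P j tα - r * Real.log lam) :=
          Finset.sum_le_sum fun j _ => key j
      _ = ∑ j : ι, α j * P j tα - (∑ j : ι, α j) * (r * Real.log lam) := by
          rw [Finset.sum_mul, ← Finset.sum_sub_distrib]
          exact Finset.sum_congr rfl fun j _ => by ring
      _ = - r * Real.log lam := by rw [hrootα, hαsum]; ring
  have h2 : r * Real.log lam ≤ M * ∑ j : ι, |α j - β j| := by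
    have : r * Real.log lam ≤ ∑ j : ι, (β j - α j) * P j tβ := by
      have : ∑ j : ι, (β j - α j) * P j tβ
          = ∑ j : ι, β j * P j tβ - ∑ j : ι, α j * P j tβ := by
        rw [← Finset.sum_sub_distrib]; exact Finset.sum_congr rfl fun j _ => by ring
      rw [this, hrootβ]
      nlinarith [h1]
    refine this.trans ?_
    calc ∑ j : ι, (β j - α j) * P j tβ ≤ ∑ j : ι, |α j - β j| * M := by
          refine Finset.sum_le_sum fun j _ => ?_
          calc (β j - α j) * P j tβ ≤ |(β j - α j) * P j tβ| := le_abs_self _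
            _ = |β j - α j| * |P j tβ| := abs_mul _ _
            _ ≤ |α j - β j| * M := by
                rw [abs_sub_comm]
                exact mul_le_mul_of_nonneg_left (hM j tβ htβ) (abs_nonneg _)
      _ = M * ∑ j : ι, |α j - β j| := by rw [← Finset.sum_mul]; ring
  rw [div_mul_eq_mul_div, le_div_iff₀ hlog]
  linarith [h2]

/-- Lipschitz continuity of the root map on the simplex: if `tα` and `tβ` are the
zeros of `∑ α_j P_j` and `∑ β_j P_j` respectively, then
`|tα − tβ| ≤ (M / log λ) · ∑_j |α_j − β_j|`, where `M` bounds all `|P_j|` on `[0,1]`.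
In particular the root map `Root : Δ → [0,1]` is continuous. -/
theorem root_map_lipschitz {ι : Type*} [Fintype ι] [Nonempty ι]
    (P : ι → ℝ → ℝ) (lam M : ℝ) (hlam : 1 < lam)
    (hcont : ∀ j, ContinuousOn (P j) (Icc (0:ℝ) 1))
    (hslope : ∀ j, ∀ s r : ℝ, 0 ≤ s → 0 < r → s + r ≤ 1 →
      P j (s + r) ≤ P j s - r * Real.log lam)
    (hzeros : ∀ j, ∃ s ∈ Icc (0:ℝ) 1, P j s = 0)
    (hM : ∀ j, ∀ s ∈ Icc (0:ℝ) 1, |P j s| ≤ M)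
    (α β : ι → ℝ) (hα : ∀ j, 0 ≤ α j) (hαsum : ∑ j : ι, α j = 1)
    (hβ : ∀ j, 0 ≤ β j) (hβsum : ∑ j : ι, β j = 1)
    (tα tβ : ℝ) (htα : tα ∈ Icc (0:ℝ) 1) (htβ : tβ ∈ Icc (0:ℝ) 1)
    (hrootα : ∑ j : ι, α j * P j tα = 0) (hrootβ : ∑ j : ι, β j * P j tβ = 0) :
    |tα - tβ| ≤ (M / Real.log lam) * ∑ j : ι, |α j - β j| := by
  have hlog : 0 < Real.log lam := Real.log_pos hlam
  have hM0 : 0 ≤ M := by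
    obtain ⟨j⟩ := ‹Nonempty ι›
    obtain ⟨s, hs, hP⟩ := hzeros j
    have := hM j s hs
    rw [hP] at this; simpa using this
  rcases lt_trichotomy tα tβ with h | h | h
  · rw [abs_sub_comm, abs_of_pos (by linarith)]
    exact root_aux P lam M hlam hslope hM α β hα hαsum tα tβ htα htβ hrootα hrootβ h
  · simp only [h, sub_self, abs_zero]
    positivity
  · rw [abs_of_pos (by linarith)]
    have := root_aux P lam M hlam hslope hM β α hβ hβsum tβ tα htβ htα hrootβ hrootα h
    calc tα - tβ ≤ (M / Real.log lam) * ∑ j : ι, |β j - α j| := this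
      _ = (M / Real.log lam) * ∑ j : ι, |α j - β j| := by
          congr 1; exact Finset.sum_congr rfl fun j _ => abs_sub_comm _ _
end

section
/- Under quasi-additivity with constant C (|a_{p+q} − a_p − a_q| ≤ C for all p,q), if a finite word decomposes into κ+1 maximal blocks of sizes l_1,…,l_{κ+1}, then the word sum differs from the sum of the block sums by at most κ·C; consequently, writing a_n for the log-partition value of the word c_1…c_n of a rarely switching sequence (κ_n = o(n)) over k symbols, one has (1/n)·|a_n − ∑_{j=1}^k n_j P_j| → 0, where n_j is the number of occurrences of symbol j in c_1…c_n and P_j is the limiting per-symbol value for constant words in symbol j. -/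
open Filter Finset

private lemma blocks_lemma {k : ℕ} (a : List (Fin k) → ℝ) (C : ℝ) (hC : 0 ≤ C)
    (hqa : ∀ u v : List (Fin k), u ≠ [] → v ≠ [] → |a (u ++ v) - (a u + a v)| ≤ C) :
    ∀ bs : List (List (Fin k)), bs ≠ [] → (∀ b ∈ bs, b ≠ []) →
      |a bs.flatten - (bs.map a).sum| ≤ ((bs.length - 1 : ℕ) : ℝ) * C := by
  intro bs
  induction bs with
  | nil => intro h; exact absurd rfl h
  | cons b rest ih =>
    intro _ hne
    cases rest with
    | nil => simp
    | cons b2 rest2 =>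
      have hb : b ≠ [] := hne b (by simp)
      have hb2 : b2 ≠ [] := hne b2 (by simp)
      have hflat : (b2 :: rest2).flatten ≠ [] := by
        simp only [List.flatten_cons]
        intro h
        exact hb2 (List.append_eq_nil_iff.mp h).1
      have h1 := hqa b ((b2 :: rest2).flatten) hb hflat
      have h2 := ih (by simp) (fun x hx => hne x (by simp [hx]))
      have key : a ((b :: b2 :: rest2).flatten) - ((b :: b2 :: rest2).map a).sum
          = (a (b ++ (b2 :: rest2).flatten) - (a b + a ((b2 :: rest2).flatten)))
            + (a ((b2 :: rest2).flatten) - ((b2 :: rest2).map a).sum) := by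
        simp [List.flatten_cons]
        ring
      rw [key]
      calc |_| ≤ _ := abs_add_le _ _
        _ ≤ C + ((b2 :: rest2).length - 1 : ℕ) * C := add_le_add h1 h2
        _ = (((b :: b2 :: rest2).length - 1 : ℕ) : ℝ) * C := by
            simp only [List.length_cons]
            push_cast
            ring

private lemma key_lemma {k : ℕ} (a : List (Fin k) → ℝ) (C : ℝ) (hC : 0 ≤ C)
    (hqa : ∀ u v : List (Fin k), u ≠ [] → v ≠ [] → |a (u ++ v) - (a u + a v)| ≤ C)
    (P : Fin k → ℝ)
    (hP : ∀ (j : Fin k) (l : ℕ), 0 < l → |a (List.replicate l j) - l * P j| ≤ C)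
    (c : ℕ → Fin k) :
    ∀ n : ℕ, 0 < n →
      |a (List.ofFn (fun i : Fin n => c i)) -
        ∑ j : Fin k, (((Finset.range n).filter (fun m => c m = j)).card : ℝ) * P j|
      ≤ (2 * (((Finset.range (n-1)).filter (fun m => c m ≠ c (m+1))).card : ℝ) + 1) * C := by
  intro n
  induction n using Nat.strong_induction_on with
  | _ n ih =>
  intro hn
  set b := c (n - 1) with hbdef
  have hmem : (n - 1) ∈ {m | ∀ i, m ≤ i → i < n → c i = b} := by
    intro i h1 h2
    have : i = n - 1 := by omega
    rw [this]
  set m0 := sInf {m | ∀ i, m ≤ i → i < n → c i = b} with hm0def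
  have hconst : ∀ i, m0 ≤ i → i < n → c i = b := Nat.sInf_mem ⟨_, hmem⟩
  have hm0le : m0 ≤ n - 1 := Nat.sInf_le hmem
  have hm0n : m0 < n := by omega
  -- word decomposition
  have hword : (List.ofFn fun i : Fin n => c i) =
      (List.ofFn fun i : Fin m0 => c i) ++ List.replicate (n - m0) b := by
    apply List.ext_getElem
    · simp; omega
    · intro i h1 h2
      simp only [List.getElem_ofFn]
      by_cases hi : i < m0
      · rw [List.getElem_append_left (by simpa using hi)]
        simp
      · rw [List.getElem_append_right (by simpa using hi)]
        simp only [List.getElem_replicate]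
        exact hconst i (le_of_not_gt hi) (by simpa using h1)
  -- counting
  have hcount : ∀ j : Fin k,
      (((Finset.range n).filter (fun m => c m = j)).card : ℝ)
      = (((Finset.range m0).filter (fun m => c m = j)).card : ℝ)
        + if j = b then ((n - m0 : ℕ) : ℝ) else 0 := by
    intro j
    have hsplit : Finset.range n = Finset.range m0 ∪ Finset.Ico m0 n := by
      rw [Finset.range_eq_Ico, Finset.range_eq_Ico]
      exact (Finset.Ico_union_Ico_eq_Ico (Nat.zero_le m0) (le_of_lt hm0n)).symm
    have hdisj : Disjoint ((Finset.range m0).filter (fun m => c m = j))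
        ((Finset.Ico m0 n).filter (fun m => c m = j)) := by
      apply Finset.disjoint_filter_filter
      rw [Finset.range_eq_Ico]
      exact Finset.Ico_disjoint_Ico_consecutive 0 m0 n
    rw [hsplit, Finset.filter_union, Finset.card_union_of_disjoint hdisj]
    have hIco : ∀ i ∈ Finset.Ico m0 n, c i = b := fun i hi =>
      hconst i (Finset.mem_Ico.mp hi).1 (Finset.mem_Ico.mp hi).2
    by_cases hj : j = b
    · have : (Finset.Ico m0 n).filter (fun m => c m = j) = Finset.Ico m0 n := by
        apply Finset.filter_true_of_mem
        intro i hi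
        rw [hIco i hi, hj]
      rw [this, Nat.card_Ico, if_pos hj]
      push_cast
      ring
    · have : (Finset.Ico m0 n).filter (fun m => c m = j) = ∅ := by
        apply Finset.filter_false_of_mem
        intro i hi h
        exact hj (h.symm.trans (hIco i hi))
      rw [this, if_neg hj]
      simp
  have hsum : ∑ j : Fin k, (((Finset.range n).filter (fun m => c m = j)).card : ℝ) * P j
      = (∑ j : Fin k, (((Finset.range m0).filter (fun m => c m = j)).card : ℝ) * P j)
        + ((n - m0 : ℕ) : ℝ) * P b := by
    simp only [hcount, add_mul, Finset.sum_add_distrib]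
    congr 1
    simp [ite_mul, Finset.sum_ite_eq']
  by_cases hm0 : m0 = 0
  · -- whole word is one constant block
    have hword' : (List.ofFn fun i : Fin n => c i) = List.replicate n b := by
      rw [hword, hm0]
      simp
    have hsum' : ∑ j : Fin k, (((Finset.range n).filter (fun m => c m = j)).card : ℝ) * P j
        = (n : ℝ) * P b := by
      rw [hsum, hm0]
      simp
    rw [hword', hsum']
    have := hP b n hn
    have h1 : (1:ℝ) ≤ 2 * (((Finset.range (n-1)).filter (fun m => c m ≠ c (m+1))).card : ℝ) + 1 := by
      have : (0:ℝ) ≤ (((Finset.range (n-1)).filter (fun m => c m ≠ c (m+1))).card : ℝ) :=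
        Nat.cast_nonneg _
      linarith
    nlinarith [abs_nonneg (a (List.replicate n b) - (n:ℝ) * P b)]
  · -- m0 ≥ 1 : split off the last block
    have hm0pos : 0 < m0 := Nat.pos_of_ne_zero hm0
    have hswitch : c (m0 - 1) ≠ c m0 := by
      have hnot : (m0 - 1) ∉ {m | ∀ i, m ≤ i → i < n → c i = b} := by
        intro h
        have := Nat.sInf_le h
        omega
      simp only [Set.mem_setOf_eq, not_forall] at hnot
      obtain ⟨i, h1, h2, h3⟩ := hnot
      have hi : i = m0 - 1 := by
        by_contra hne
        exact h3 (hconst i (by omega) h2)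
      have hcm0 : c m0 = b := hconst m0 le_rfl hm0n
      rw [hcm0, ← hi]
      exact h3
    -- switch count inequality
    have hcard : ((Finset.range (m0-1)).filter (fun m => c m ≠ c (m+1))).card + 1
        ≤ ((Finset.range (n-1)).filter (fun m => c m ≠ c (m+1))).card := by
      have hsub : insert (m0-1) ((Finset.range (m0-1)).filter (fun m => c m ≠ c (m+1)))
          ⊆ (Finset.range (n-1)).filter (fun m => c m ≠ c (m+1)) := by
        intro x hx
        simp only [Finset.mem_insert, Finset.mem_filter, Finset.mem_range] at hx ⊢
        rcases hx with rfl | ⟨h1, h2⟩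
        · refine ⟨by omega, ?_⟩
          have : m0 - 1 + 1 = m0 := by omega
          rw [this]
          exact hswitch
        · exact ⟨by omega, h2⟩
      have hnotmem : (m0-1) ∉ (Finset.range (m0-1)).filter (fun m => c m ≠ c (m+1)) := by
        simp
      calc ((Finset.range (m0-1)).filter (fun m => c m ≠ c (m+1))).card + 1
          = (insert (m0-1) ((Finset.range (m0-1)).filter (fun m => c m ≠ c (m+1)))).card := by
            rw [Finset.card_insert_of_notMem hnotmem]
        _ ≤ _ := Finset.card_le_card hsub
    have hune : (List.ofFn fun i : Fin m0 => c i) ≠ [] := by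
      intro h
      have := congrArg List.length h
      simp at this
      omega
    have hvne : List.replicate (n - m0) b ≠ [] := by
      intro h
      have := congrArg List.length h
      simp at this
      omega
    have h1 := hqa (List.ofFn fun i : Fin m0 => c i) (List.replicate (n - m0) b) hune hvne
    have h2 := ih m0 hm0n hm0pos
    have h3 := hP b (n - m0) (by omega)
    have hdecomp : a (List.ofFn fun i : Fin n => c i)
        - ∑ j : Fin k, (((Finset.range n).filter (fun m => c m = j)).card : ℝ) * P j
        = (a ((List.ofFn fun i : Fin m0 => c i) ++ List.replicate (n - m0) b)
            - (a (List.ofFn fun i : Fin m0 => c i) + a (List.replicate (n - m0) b)))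
          + (a (List.ofFn fun i : Fin m0 => c i)
            - ∑ j : Fin k, (((Finset.range m0).filter (fun m => c m = j)).card : ℝ) * P j)
          + (a (List.replicate (n - m0) b) - ((n - m0 : ℕ) : ℝ) * P b) := by
      rw [hword, hsum]
      ring
    rw [hdecomp]
    set X := a ((List.ofFn fun i : Fin m0 => c i) ++ List.replicate (n - m0) b)
      - (a (List.ofFn fun i : Fin m0 => c i) + a (List.replicate (n - m0) b)) with hX
    set Y := a (List.ofFn fun i : Fin m0 => c i)
      - ∑ j : Fin k, (((Finset.range m0).filter (fun m => c m = j)).card : ℝ) * P j with hY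
    set Z := a (List.replicate (n - m0) b) - ((n - m0 : ℕ) : ℝ) * P b with hZ
    have hXYZ : |X + Y + Z| ≤ |X| + |Y| + |Z| :=
      (abs_add_le _ _).trans (by gcongr; exact abs_add_le _ _)
    refine hXYZ.trans ?_
    have hcastc : (((Finset.range (m0-1)).filter (fun m => c m ≠ c (m+1))).card : ℝ) + 1
        ≤ (((Finset.range (n-1)).filter (fun m => c m ≠ c (m+1))).card : ℝ) := by
      exact_mod_cast hcard
    nlinarith [h1, h2, h3]

/-- Quasi-additivity over blocks: a word sum differs from the sum over its `κ+1`
blocks by at most `κ·C`; consequently, for a rarely switching sequence,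
`(1/n)|a_n − ∑_j n_j P_j| → 0`. -/
theorem quasi_additive_rare_switching {k : ℕ} (hk : 0 < k)
    (a : List (Fin k) → ℝ) (C : ℝ) (hC : 0 ≤ C)
    (hqa : ∀ u v : List (Fin k), u ≠ [] → v ≠ [] → |a (u ++ v) - (a u + a v)| ≤ C)
    (P : Fin k → ℝ)
    (hP : ∀ (j : Fin k) (l : ℕ), 0 < l → |a (List.replicate l j) - l * P j| ≤ C)
    (c : ℕ → Fin k) (κ : ℕ → ℕ)
    (hκdef : ∀ n, κ n = ((Finset.range n).filter (fun m => c m ≠ c (m + 1))).card)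
    (hκ : Tendsto (fun n : ℕ => (κ n : ℝ) / n) atTop (nhds 0)) :
    (∀ bs : List (List (Fin k)), bs ≠ [] → (∀ b ∈ bs, b ≠ []) →
        |a bs.flatten - (bs.map a).sum| ≤ ((bs.length - 1 : ℕ) : ℝ) * C) ∧
      Tendsto
        (fun n : ℕ => (1 / (n : ℝ)) *
          |a (List.ofFn (fun i : Fin n => c i)) -
            ∑ j : Fin k, (((Finset.range n).filter (fun m => c m = j)).card : ℝ) * P j|)
        atTop (nhds 0) := by
  refine ⟨blocks_lemma a C hC hqa, ?_⟩
  have hlim : Tendsto (fun n : ℕ => 2 * C * ((κ n : ℝ) / n) + C * (1 / n)) atTop (nhds 0) := by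
    have h1 := hκ.const_mul (2 * C)
    have h2 := (tendsto_one_div_atTop_nhds_zero_nat).const_mul C
    simpa using h1.add h2
  apply squeeze_zero' (g := fun n : ℕ => 2 * C * ((κ n : ℝ) / n) + C * (1 / n))
  · filter_upwards with n
    positivity
  · filter_upwards [eventually_ge_atTop 1] with n hn
    have hnpos : (0:ℝ) < n := by exact_mod_cast hn
    have hkey := key_lemma a C hC hqa P hP c n hn
    have hsub : ((Finset.range (n-1)).filter (fun m => c m ≠ c (m+1))).card
        ≤ κ n := by
      rw [hκdef]
      apply Finset.card_le_card
      apply Finset.filter_subset_filter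
      exact Finset.range_subset_range.mpr (by omega)
    have hbound : |a (List.ofFn (fun i : Fin n => c i)) -
          ∑ j : Fin k, (((Finset.range n).filter (fun m => c m = j)).card : ℝ) * P j|
        ≤ (2 * (κ n : ℝ) + 1) * C := by
      refine hkey.trans ?_
      have : (((Finset.range (n-1)).filter (fun m => c m ≠ c (m+1))).card : ℝ) ≤ (κ n : ℝ) := by
        exact_mod_cast hsub
      nlinarith
    calc (1 / (n:ℝ)) * |_| ≤ (1 / (n:ℝ)) * ((2 * (κ n : ℝ) + 1) * C) := by
          apply mul_le_mul_of_nonneg_left hbound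
          positivity
      _ = 2 * C * ((κ n : ℝ) / n) + C * (1 / n) := by
          field_simp
  · exact hlim
end
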